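/- arXiv:1409.5969 — 10 statements merged into one kernel-verified Lean document; each statement's English description precedes it below -/
import Mathlib

section
/- If (v; r, s; λ) are parameters of an SDS with v = 2n where n = r + s − λ, and a = v − 2r, b = v − 2s, then a² + b² = 2v. In particular v is even and 2v is a sum of two squares. -/
/-- for SDS parameters (v;r,s;λ) with v = 2n, n = r+s-λ, setting
a = v-2r, b = v-2s we get a² + b² = 2v; in particular v is even and 2v is a
sum of two squares. -/
theorem sds_parameters_sum_of_two_squares (v r s l : ℤ)
    (hv : 0 ≤ v) (hr : 0 ≤ r) (hs : 0 ≤ s) (hl : 0 ≤ l)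
    (hpar : l * (v - 1) = r * (r - 1) + s * (s - 1))
    (hn : v = 2 * (r + s - l))
    (a b : ℤ) (ha : a = v - 2 * r) (hb : b = v - 2 * s) :
    a ^ 2 + b ^ 2 = 2 * v ∧ Even v ∧ ∃ p q : ℤ, 2 * v = p ^ 2 + q ^ 2 := by
  have key : a ^ 2 + b ^ 2 = 2 * v := by
    subst ha hb
    linear_combination (-4 : ℤ) * hpar + (2 * v - 2) * hn
  exact ⟨key, ⟨r + s - l, by linarith⟩, a, b, key.symm⟩
end

section
/- If (A, B) is a periodic Golay pair of length v > 1, then v/2 is a sum of two integer squares. -/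
open Finset

private lemma pm_sum_mod4 {ι : Type*} [Fintype ι] [DecidableEq ι] (c : ι → ℤ)
    (hc : ∀ i, c i = 1 ∨ c i = -1) (hp : ∏ i, c i = 1) :
    (4 : ℤ) ∣ (∑ i, c i - Fintype.card ι) := by
  classical
  set S := Finset.univ.filter (fun i => c i = -1) with hS
  have hcompl : ∀ i ∈ Sᶜ, c i = 1 := by
    intro i hi
    rcases hc i with h | h
    · exact h
    · exfalso
      have : i ∈ S := by simp [hS, h]
      simp [Finset.mem_compl] at hi
      exact hi this
  have h1 : ∑ i ∈ S, c i = -(S.card : ℤ) := by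
    rw [Finset.sum_congr rfl (fun i hi => (Finset.mem_filter.mp hi).2)]
    simp [hS]
  have h2 : ∑ i ∈ Sᶜ, c i = (Sᶜ.card : ℤ) := by
    rw [Finset.sum_congr rfl hcompl]; simp
  have hsum : ∑ i, c i = (Fintype.card ι : ℤ) - 2 * S.card := by
    have htot := Finset.sum_add_sum_compl S c
    rw [h1, h2] at htot
    have hcard := Finset.card_compl S
    have hle : S.card ≤ Fintype.card ι := Finset.card_le_univ S
    omega
  have hprod1 : ∏ i ∈ S, c i = (-1 : ℤ) ^ S.card := by
    rw [Finset.prod_congr rfl (fun i hi => (Finset.mem_filter.mp hi).2)]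
    simp [hS]
  have hprod2 : ∏ i ∈ Sᶜ, c i = 1 := by
    rw [Finset.prod_congr rfl hcompl]; simp
  have hpow : (-1 : ℤ) ^ S.card = 1 := by
    have := Finset.prod_mul_prod_compl S c
    rw [hprod1, hprod2, hp] at this
    linarith
  have heven : Even S.card := by
    by_contra h
    rw [Nat.not_even_iff_odd] at h
    rw [h.neg_one_pow] at hpow
    norm_num at hpow
  obtain ⟨k, hk⟩ := heven
  rw [hsum]
  refine ⟨-k, by push_cast [hk]; ring⟩

private lemma sum_shift {v : ℕ} [NeZero v] (A : ZMod v → ℤ) (s : ZMod v) :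
    ∑ j : ZMod v, A (j + s) = ∑ j : ZMod v, A j :=
  Fintype.sum_equiv (Equiv.addRight s) _ _ (fun _ => rfl)

private lemma prod_shift {v : ℕ} [NeZero v] (A : ZMod v → ℤ) (s : ZMod v) :
    ∏ j : ZMod v, A (j + s) = ∏ j : ZMod v, A j :=
  Fintype.prod_equiv (Equiv.addRight s) _ _ (fun _ => rfl)

private lemma paf_mod4 {v : ℕ} [NeZero v] (A : ZMod v → ℤ)
    (hA : ∀ i, A i = 1 ∨ A i = -1) (s : ZMod v) :
    (4 : ℤ) ∣ ((∑ j : ZMod v, A (j + s) * A j) - v) := by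
  have hc : ∀ j : ZMod v, A (j + s) * A j = 1 ∨ A (j + s) * A j = -1 := by
    intro j
    rcases hA (j + s) with h1 | h1 <;> rcases hA j with h2 | h2 <;>
      simp [h1, h2]
  have hp : ∏ j : ZMod v, A (j + s) * A j = 1 := by
    rw [Finset.prod_mul_distrib, prod_shift, ← pow_two, ← Finset.prod_pow]
    apply Finset.prod_eq_one
    intro j _
    rcases hA j with h | h <;> rw [h] <;> ring
  have := pm_sum_mod4 (fun j : ZMod v => A (j + s) * A j) hc hp
  rwa [ZMod.card] at this

/-- for a periodic Golay pair of length v > 1, v/2 is a sum of two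
integer squares (equivalently v = 2(x² + y²)). -/
theorem periodic_golay_half_length_sum_of_squares (v : ℕ) [NeZero v] (hv : 1 < v)
    (A B : ZMod v → ℤ)
    (hA : ∀ i, A i = 1 ∨ A i = -1) (hB : ∀ i, B i = 1 ∨ B i = -1)
    (hpg : ∀ s : ZMod v, s ≠ 0 →
      (∑ j : ZMod v, A (j + s) * A j) + (∑ j : ZMod v, B (j + s) * B j) = 0) :
    ∃ x y : ℤ, (v : ℤ) = 2 * (x ^ 2 + y ^ 2) := by
  classical
  haveI : Fact (1 < v) := ⟨hv⟩
  set x := ∑ j : ZMod v, A j with hx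
  set y := ∑ j : ZMod v, B j with hy
  -- total sum of PAF over all shifts
  have hsumA : ∑ s : ZMod v, ∑ j : ZMod v, A (j + s) * A j = x ^ 2 := by
    rw [Finset.sum_comm]
    have : ∀ j : ZMod v, ∑ s : ZMod v, A (j + s) * A j = x * A j := by
      intro j
      rw [← Finset.sum_mul]
      congr 1
      exact Fintype.sum_equiv (Equiv.addLeft j) _ _ (fun _ => rfl)
    rw [Finset.sum_congr rfl (fun j _ => this j), ← Finset.mul_sum, ← hx, pow_two]
  have hsumB : ∑ s : ZMod v, ∑ j : ZMod v, B (j + s) * B j = y ^ 2 := by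
    rw [Finset.sum_comm]
    have : ∀ j : ZMod v, ∑ s : ZMod v, B (j + s) * B j = y * B j := by
      intro j
      rw [← Finset.sum_mul]
      congr 1
      exact Fintype.sum_equiv (Equiv.addLeft j) _ _ (fun _ => rfl)
    rw [Finset.sum_congr rfl (fun j _ => this j), ← Finset.mul_sum, ← hy, pow_two]
  -- PAF at 0 equals v
  have hpaf0 : ∀ (C : ZMod v → ℤ), (∀ i, C i = 1 ∨ C i = -1) →
      ∑ j : ZMod v, C (j + 0) * C j = (v : ℤ) := by
    intro C hC
    have : ∀ j : ZMod v, C (j + 0) * C j = 1 := by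
      intro j
      rcases hC j with h | h <;> simp [h]
    rw [Finset.sum_congr rfl (fun j _ => this j)]
    simp [ZMod.card]
  -- two times v = x^2 + y^2
  have hkey : x ^ 2 + y ^ 2 = 2 * (v : ℤ) := by
    have hsplit : ∀ (f : ZMod v → ℤ),
        ∑ s : ZMod v, f s = f 0 + ∑ s ∈ Finset.univ.erase (0 : ZMod v), f s := by
      intro f
      rw [Finset.add_sum_erase _ f (Finset.mem_univ 0)]
    have hErase : ∑ s ∈ Finset.univ.erase (0 : ZMod v),
        ((∑ j : ZMod v, A (j + s) * A j) + (∑ j : ZMod v, B (j + s) * B j)) = 0 := by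
      apply Finset.sum_eq_zero
      intro s hs
      exact hpg s (Finset.ne_of_mem_erase hs)
    have h1 := hsplit (fun s => ∑ j : ZMod v, A (j + s) * A j)
    have h2 := hsplit (fun s => ∑ j : ZMod v, B (j + s) * B j)
    rw [hpaf0 A hA] at h1
    rw [hpaf0 B hB] at h2
    rw [Finset.sum_add_distrib] at hErase
    rw [hsumA] at h1
    rw [hsumB] at h2
    linarith
  -- v is even
  have hveven : (2 : ℤ) ∣ (v : ℤ) := by
    have hs1 : (1 : ZMod v) ≠ 0 := one_ne_zero
    have h4A := paf_mod4 A hA 1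
    have h4B := paf_mod4 B hB 1
    have h0 := hpg 1 hs1
    have : (4 : ℤ) ∣ (2 * v) := by
      have := dvd_add h4A h4B
      have heq : ((∑ j : ZMod v, A (j + 1) * A j) - v) +
          ((∑ j : ZMod v, B (j + 1) * B j) - v) = -(2 * v) := by linarith
      rw [heq] at this
      exact (dvd_neg.mp this)
    omega
  -- x and y have the same parity as v
  have hparity : ∀ (C : ZMod v → ℤ), (∀ i, C i = 1 ∨ C i = -1) →
      (2 : ℤ) ∣ ((∑ j : ZMod v, C j) - v) := by
    intro C hC
    have : (∑ j : ZMod v, C j) - v = ∑ j : ZMod v, (C j - 1) := by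
      rw [Finset.sum_sub_distrib]
      simp [ZMod.card]
    rw [this]
    apply Finset.dvd_sum
    intro j _
    rcases hC j with h | h <;> rw [h] <;> norm_num
  have hxe : (2 : ℤ) ∣ x := by
    have := hparity A hA
    rw [← hx] at this
    omega
  have hye : (2 : ℤ) ∣ y := by
    have := hparity B hB
    rw [← hy] at this
    omega
  obtain ⟨a, ha⟩ := hxe
  obtain ⟨b, hb⟩ := hye
  refine ⟨a, b, ?_⟩
  have : (2 * a) ^ 2 + (2 * b) ^ 2 = 2 * (v : ℤ) := by rw [← ha, ← hb]; exact hkey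
  nlinarith [this]
end

section
/- Let X, Y ⊆ ℤ_v and let A, B be the associated ±1-sequences (a_i = −1 iff i ∈ X, and similarly for B). Then (X, Y) is a supplementary difference set with parameters (v; |X|, |Y|; λ) satisfying v = 2(|X| + |Y| − λ) if and only if (A, B) is a periodic Golay pair of length v (assuming v > 1). -/
open Finset

lemma paf_eq (v : ℕ) [NeZero v] (X : Finset (ZMod v)) (A : ZMod v → ℤ)
    (hA : ∀ i, A i = if i ∈ X then -1 else 1) (s : ZMod v) :
    (∑ j : ZMod v, A (j + s) * A j) =
      (v : ℤ) - 4 * (X.card : ℤ) +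
        4 * ((((X ×ˢ X).filter (fun p => p.1 - p.2 = s)).card : ℤ)) := by
  have hcard : (((X ×ˢ X).filter (fun p => p.1 - p.2 = s)).card)
      = ((univ.filter (fun j : ZMod v => j + s ∈ X ∧ j ∈ X)).card) := by
    apply Finset.card_bij' (fun p _ => p.2) (fun j _ => (j + s, j))
    · intro p hp
      simp only [mem_filter, mem_product] at hp
      have hp1 : p.1 = p.2 + s := by
        have := hp.2
        linear_combination this
      simp only [mem_filter, mem_univ, true_and]
      exact ⟨hp1 ▸ hp.1.1, hp.1.2⟩
    · intro j hj
      simp only [mem_filter, mem_univ, true_and] at hj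
      simp only [mem_filter, mem_product]
      exact ⟨⟨hj.1, hj.2⟩, by ring⟩
    · intro p hp
      simp only [mem_filter, mem_product] at hp
      have hp1 : p.1 = p.2 + s := by linear_combination hp.2
      exact Prod.ext hp1.symm rfl
    · intro j hj; rfl
  set χ : ZMod v → ℤ := fun i => if i ∈ X then 1 else 0 with hχ
  have hAχ : ∀ i, A i = 1 - 2 * χ i := by
    intro i; rw [hA, hχ]; dsimp only; split_ifs <;> ring
  have expand : ∀ j : ZMod v, A (j + s) * A j
      = 1 - 2 * χ (j + s) - 2 * χ j + 4 * (χ (j + s) * χ j) := by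
    intro j; rw [hAχ, hAχ]; ring
  have hsum1 : (∑ _j : ZMod v, (1 : ℤ)) = (v : ℤ) := by
    simp [Finset.card_univ, ZMod.card]
  have hsumχ : (∑ j : ZMod v, χ j) = (X.card : ℤ) := by
    rw [hχ]
    simp [Finset.sum_ite_mem]
  have hsumχs : (∑ j : ZMod v, χ (j + s)) = (X.card : ℤ) := by
    rw [← hsumχ]
    exact Fintype.sum_bijective (fun j => j + s)
      (Equiv.addRight s).bijective _ _ (fun j => rfl)
  have hsumprod : (∑ j : ZMod v, χ (j + s) * χ j)
      = ((univ.filter (fun j : ZMod v => j + s ∈ X ∧ j ∈ X)).card : ℤ) := by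
    rw [← Finset.sum_boole]
    apply Finset.sum_congr rfl
    intro j _
    rw [hχ]; dsimp only
    by_cases h1 : j + s ∈ X <;> by_cases h2 : j ∈ X <;> simp [h1, h2]
  calc (∑ j : ZMod v, A (j + s) * A j)
      = ∑ j : ZMod v, (1 - 2 * χ (j + s) - 2 * χ j + 4 * (χ (j + s) * χ j)) :=
        Finset.sum_congr rfl (fun j _ => expand j)
    _ = (∑ _j : ZMod v, (1:ℤ)) - 2 * (∑ j : ZMod v, χ (j + s))
          - 2 * (∑ j : ZMod v, χ j) + 4 * (∑ j : ZMod v, χ (j + s) * χ j) := by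
        rw [Finset.sum_add_distrib, Finset.sum_sub_distrib, Finset.sum_sub_distrib,
          Finset.mul_sum, Finset.mul_sum, Finset.mul_sum]
    _ = (v : ℤ) - 4 * (X.card : ℤ)
          + 4 * ((((X ×ˢ X).filter (fun p => p.1 - p.2 = s)).card : ℤ)) := by
        rw [hsum1, hsumχ, hsumχs, hsumprod, hcard]; ring

/-- (X,Y) is an SDS with parameters (v;|X|,|Y|;λ) satisfying
v = 2(|X|+|Y|-λ) iff the associated ±1-sequences form a periodic Golay pair. -/
theorem sds_iff_periodic_golay (v : ℕ) [NeZero v] (hv : 1 < v)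
    (X Y : Finset (ZMod v)) (A B : ZMod v → ℤ)
    (hA : ∀ i, A i = if i ∈ X then -1 else 1)
    (hB : ∀ i, B i = if i ∈ Y then -1 else 1) :
    (∃ l : ℤ,
      (∀ c : ZMod v, c ≠ 0 →
        ((((X ×ˢ X).filter (fun p => p.1 - p.2 = c)).card : ℤ) +
         (((Y ×ˢ Y).filter (fun p => p.1 - p.2 = c)).card : ℤ)) = l) ∧
      (v : ℤ) = 2 * ((X.card : ℤ) + (Y.card : ℤ) - l)) ↔
    (∀ s : ZMod v, s ≠ 0 →
      (∑ j : ZMod v, A (j + s) * A j) + (∑ j : ZMod v, B (j + s) * B j) = 0) := by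
  haveI : Fact (1 < v) := ⟨hv⟩
  constructor
  · rintro ⟨l, hl, hv2⟩ s hs
    rw [paf_eq v X A hA s, paf_eq v Y B hB s]
    have h := hl s hs
    linarith
  · intro h
    have hone : (1 : ZMod v) ≠ 0 := one_ne_zero
    set l : ℤ := (((X ×ˢ X).filter (fun p => p.1 - p.2 = (1 : ZMod v))).card : ℤ)
      + (((Y ×ˢ Y).filter (fun p => p.1 - p.2 = (1 : ZMod v))).card : ℤ) with hldef
    have h1 := h 1 hone
    rw [paf_eq v X A hA 1, paf_eq v Y B hB 1] at h1
    refine ⟨l, fun c hc => ?_, by linarith⟩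
    have hcEq := h c hc
    rw [paf_eq v X A hA c, paf_eq v Y B hB c] at hcEq
    linarith
end

section
/- If (X, Y) is an SDS over ℤ_v with parameters (v; r, s; λ) satisfying v = 2n, n = r + s − λ, then the circulant ±1-matrices C_X and C_Y (whose first rows are the associated binary sequences of X and Y) satisfy C_X C_Xᵀ + C_Y C_Yᵀ = 2v·I_v. -/
lemma sds_count_aux (v : ℕ) [NeZero v] (S : Finset (ZMod v)) (i j : ZMod v) :
    (Finset.univ.filter (fun k : ZMod v => k - i ∈ S ∧ k - j ∈ S)).card
      = ((S ×ˢ S).filter (fun p => p.1 - p.2 = j - i)).card := by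
  apply Finset.card_bij (fun k _ => (k - i, k - j))
  · intro k hk
    simp only [Finset.mem_filter, Finset.mem_univ, true_and] at hk
    simp only [Finset.mem_filter, Finset.mem_product]
    refine ⟨⟨hk.1, hk.2⟩, by ring⟩
  · intro a ha b hb hab
    have := congrArg Prod.fst hab
    simp only at this
    linear_combination this
  · intro p hp
    simp only [Finset.mem_filter, Finset.mem_product] at hp
    refine ⟨p.1 + i, ?_, ?_⟩
    · simp only [Finset.mem_filter, Finset.mem_univ, true_and, add_sub_cancel_right]
      refine ⟨hp.1.1, ?_⟩
      have : p.1 + i - j = p.2 := by linear_combination hp.2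
      rw [this]; exact hp.1.2
    · have : p.1 + i - j = p.2 := by linear_combination hp.2
      simp [this]

lemma sds_sum_aux (v : ℕ) [NeZero v] (S : Finset (ZMod v)) (i j : ZMod v) :
    ∑ k : ZMod v, (if k - i ∈ S then (-1:ℤ) else 1) * (if k - j ∈ S then (-1:ℤ) else 1)
      = (v : ℤ) - 4 * S.card
        + 4 * ((S ×ˢ S).filter (fun p => p.1 - p.2 = j - i)).card := by
  have hrw : ∀ k : ZMod v,
      (if k - i ∈ S then (-1:ℤ) else 1) * (if k - j ∈ S then (-1:ℤ) else 1)
      = 1 - 2 * (if k - i ∈ S then (1:ℤ) else 0) - 2 * (if k - j ∈ S then (1:ℤ) else 0)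
        + 4 * (if k - i ∈ S ∧ k - j ∈ S then (1:ℤ) else 0) := by
    intro k
    by_cases h1 : k - i ∈ S <;> by_cases h2 : k - j ∈ S <;> simp [h1, h2] <;> ring
  simp_rw [hrw]
  rw [Finset.sum_add_distrib, Finset.sum_sub_distrib, Finset.sum_sub_distrib]
  have hconst : ∑ _k : ZMod v, (1:ℤ) = (v : ℤ) := by
    simp [Finset.card_univ, ZMod.card]
  have hsub : ∀ a : ZMod v, ∑ k : ZMod v, (if k - a ∈ S then (1:ℤ) else 0) = S.card := by
    intro a
    have h := Equiv.sum_comp (Equiv.subRight a) (fun k => if k ∈ S then (1:ℤ) else 0)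
    simp only [Equiv.subRight_apply] at h
    rw [h, Finset.sum_ite_mem, Finset.univ_inter, Finset.sum_const, nsmul_eq_mul, mul_one]
  have hprod : ∑ k : ZMod v, (if k - i ∈ S ∧ k - j ∈ S then (1:ℤ) else 0)
      = (((S ×ˢ S).filter (fun p => p.1 - p.2 = j - i)).card : ℤ) := by
    rw [Finset.sum_boole]
    rw [sds_count_aux v S i j]
  rw [← Finset.mul_sum, ← Finset.mul_sum, ← Finset.mul_sum, hconst, hsub, hsub, hprod]
  ring

/-- for an SDS (X,Y) with parameters (v;r,s;λ), v = 2n, the circulant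
±1-matrices satisfy C_X C_Xᵀ + C_Y C_Yᵀ = 2v I. -/
theorem sds_circulant_matrix_identity (v : ℕ) [NeZero v]
    (X Y : Finset (ZMod v)) (l : ℤ)
    (hsds : ∀ c : ZMod v, c ≠ 0 →
      ((((X ×ˢ X).filter (fun p => p.1 - p.2 = c)).card : ℤ) +
       (((Y ×ˢ Y).filter (fun p => p.1 - p.2 = c)).card : ℤ)) = l)
    (hn : (v : ℤ) = 2 * ((X.card : ℤ) + (Y.card : ℤ) - l))
    (CX CY : Matrix (ZMod v) (ZMod v) ℤ)
    (hCX : ∀ i j, CX i j = if j - i ∈ X then -1 else 1)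
    (hCY : ∀ i j, CY i j = if j - i ∈ Y then -1 else 1) :
    CX * CX.transpose + CY * CY.transpose =
      (2 * (v : ℤ)) • (1 : Matrix (ZMod v) (ZMod v) ℤ) := by
  ext i j
  simp only [Matrix.add_apply, Matrix.mul_apply, Matrix.transpose_apply,
    Matrix.smul_apply, Matrix.one_apply, smul_eq_mul]
  simp_rw [hCX, hCY]
  rw [sds_sum_aux v X i j, sds_sum_aux v Y i j]
  by_cases hij : i = j
  · subst hij
    simp only [if_pos rfl, mul_one, sub_self]
    have hX : ((X ×ˢ X).filter (fun p => p.1 - p.2 = (0 : ZMod v))).card = X.card := by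
      rw [← Finset.diag_card X]
      congr 1
      ext p
      simp only [Finset.mem_filter, Finset.mem_product, Finset.mem_diag, sub_eq_zero]
      aesop
    have hY : ((Y ×ˢ Y).filter (fun p => p.1 - p.2 = (0 : ZMod v))).card = Y.card := by
      rw [← Finset.diag_card Y]
      congr 1
      ext p
      simp only [Finset.mem_filter, Finset.mem_product, Finset.mem_diag, sub_eq_zero]
      aesop
    rw [hX, hY]; push_cast; simp; ring
  · rw [if_neg hij]
    have hc : j - i ≠ 0 := fun h => hij (by linear_combination -h)
    have := hsds (j - i) hc
    push_cast at this ⊢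
    linarith [this, hn]
end

section
/- Let A be a complex sequence of length v = dm and let A^{(d)} be its m-compression, with entries a_j^{(d)} = Σ_{k=0}^{m−1} a_{j+kd}. Then for every s, PAF_{A^{(d)}}(s) = Σ_{k=0}^{m−1} PAF_A(s + kd), where autocorrelations are taken modulo d and modulo v respectively. -/
open Finset

private lemma shift_sum (m q : ℕ) (f : ℕ → ℂ) :
    ∑ k ∈ range m, f ((q + k) % m) = ∑ k ∈ range m, f (k % m) := by
  induction q with
  | zero => simp
  | succ q ih =>
    rw [← ih]
    have key : ∀ k : ℕ, (q + 1 + k) % m = (q + (k + 1)) % m := by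
      intro k; congr 1; omega
    simp only [key]
    have h1 := Finset.sum_range_succ' (fun k => f ((q + k) % m)) m
    have h2 := Finset.sum_range_succ (fun k => f ((q + k) % m)) m
    have h3 : (q + m) % m = (q + 0) % m := by
      simp [Nat.add_mod_right]
    have h4 := h1.symm.trans h2
    simp only [h3] at h4
    exact add_right_cancel h4

private lemma mod_index (d m t x : ℕ) (hm : 0 < m) (ht : t < d) :
    (t + x * d) % (d * m) = t + (x % m) * d := by
  have hx : x * d = (x % m) * d + (x / m) * (d * m) := by
    conv_lhs => rw [← Nat.div_add_mod x m]
    ring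
  rw [show t + x * d = t + (x % m) * d + (x / m) * (d * m) by rw [hx]; ring,
    Nat.add_mul_mod_self_right]
  apply Nat.mod_eq_of_lt
  have h1 : x % m < m := Nat.mod_lt x hm
  calc t + (x % m) * d < d + (x % m) * d := by omega
    _ ≤ d + (m - 1) * d := by
        have : (x % m) * d ≤ (m - 1) * d := Nat.mul_le_mul_right d (by omega)
        omega
    _ = d * m := by
        cases m with
        | zero => omega
        | succ n => simp only [Nat.add_sub_cancel]; ring

/-- PAF of the m-compression A^{(d)} (of a complex sequence of
length v = dm) satisfies PAF_{A^{(d)}}(s) = Σ_{k<m} PAF_A(s + kd). -/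
theorem paf_of_compression (d m : ℕ) (hd : 0 < d) (hm : 0 < m)
    (v : ℕ) (hv : v = d * m) (A : ℕ → ℂ) (Ad : ℕ → ℂ)
    (hAd : ∀ j, Ad j = ∑ k ∈ Finset.range m, A ((j + k * d) % v)) :
    ∀ s : ℕ,
      (∑ j ∈ Finset.range d, Ad ((j + s) % d) * star (Ad (j % d))) =
      ∑ k ∈ Finset.range m,
        ∑ j ∈ Finset.range v, A ((j + (s + k * d)) % v) * star (A (j % v)) := by
  have Tdef : ∀ r : ℕ, ∑ k ∈ range m, A ((r + k * d) % v)
      = ∑ k ∈ range m, A (r % d + k * d) := by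
    intro r
    have e1 : ∀ k, (r + k * d) % v = r % d + ((r / d + k) % m) * d := by
      intro k
      rw [hv]
      have hr : r + k * d = r % d + (r / d + k) * d := by
        conv_lhs => rw [← Nat.div_add_mod r d]
        ring
      rw [hr, mod_index d m _ _ hm (Nat.mod_lt r hd)]
    simp only [e1]
    have hsh := shift_sum m (r / d) (fun x => A (r % d + x * d))
    rw [hsh]
    refine Finset.sum_congr rfl fun k hk => ?_
    rw [Nat.mod_eq_of_lt (mem_range.mp hk)]
  have hAd' : ∀ x : ℕ, Ad x = ∑ k ∈ range m, A (x % d + k * d) :=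
    fun x => (hAd x).trans (Tdef x)
  have split : ∀ F : ℕ → ℂ,
      ∑ j ∈ range (d * m), F j = ∑ j0 ∈ range d, ∑ l ∈ range m, F (j0 + l * d) := by
    intro F
    rw [← Finset.sum_product']
    refine Finset.sum_nbij' (fun j => (j % d, j / d)) (fun p => p.1 + p.2 * d)
      ?_ ?_ ?_ ?_ ?_
    · intro a ha
      simp only [mem_range] at ha
      simp only [Finset.mem_product, mem_range]
      exact ⟨Nat.mod_lt a hd, Nat.div_lt_of_lt_mul ha⟩
    · rintro ⟨p1, p2⟩ hp
      simp only [Finset.mem_product, mem_range] at hp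
      simp only [mem_range]
      calc p1 + p2 * d < d + p2 * d := by omega
        _ ≤ d + (m - 1) * d := by
            have : p2 * d ≤ (m - 1) * d := Nat.mul_le_mul_right d (by omega)
            omega
        _ ≤ d * m := by
            have : d + (m - 1) * d = d * m := by
              cases m with
              | zero => omega
              | succ n => simp only [Nat.add_sub_cancel]; ring
            omega
    · intro a _
      simp only
      rw [add_comm, mul_comm, Nat.div_add_mod]
    · rintro ⟨p1, p2⟩ hp
      simp only [Finset.mem_product, mem_range] at hp
      simp only [Nat.add_mul_mod_self_right, Nat.mod_eq_of_lt hp.1,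
        Nat.add_mul_div_right _ _ hd, Nat.div_eq_of_lt hp.1, zero_add]
    · intro a _
      simp only
      congr 1
      rw [mul_comm, Nat.mod_add_div]
  intro s
  rw [Finset.sum_comm]
  have hR : ∀ j ∈ range v,
      ∑ k ∈ range m, A ((j + (s + k * d)) % v) * star (A (j % v))
        = (∑ k ∈ range m, A ((j + s) % d + k * d)) * star (A j) := by
    intro j hj
    have hjv := mem_range.mp hj
    rw [← Finset.sum_mul, Nat.mod_eq_of_lt hjv]
    congr 1
    rw [← Tdef (j + s)]
    refine Finset.sum_congr rfl fun k _ => ?_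
    congr 2
    omega
  rw [Finset.sum_congr rfl hR, hv, split]
  refine Finset.sum_congr rfl fun j hj => ?_
  have hjd := mem_range.mp hj
  have hmod : ∀ l : ℕ, (j + l * d + s) % d = (j + s) % d := by
    intro l
    rw [show j + l * d + s = (j + s) + l * d by ring, Nat.add_mul_mod_self_right]
  simp only [hmod]
  rw [← Finset.mul_sum, hAd', hAd', Nat.mod_mod_of_dvd _ dvd_rfl,
    Nat.mod_eq_of_lt hjd, ← star_sum, Nat.mod_eq_of_lt hjd]
end

section
/- If A_1,…,A_t are complex complementary sequences of length v = dm (i.e., Σ_i PAF_{A_i}(s) = 0 for all s ≢ 0 mod v), then their m-compressions A_1^{(d)},…,A_t^{(d)} are complementary sequences of length d, i.e., Σ_i PAF_{A_i^{(d)}}(s) = 0 for all s ≢ 0 mod d. -/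
open Finset

private lemma shift_one (g : ℕ → ℂ) (m : ℕ) (hp : ∀ k, g (k + m) = g k) :
    ∑ k ∈ range m, g (k + 1) = ∑ k ∈ range m, g k := by
  cases m with
  | zero => simp
  | succ n =>
    rw [Finset.sum_range_succ, Finset.sum_range_succ' g n]
    congr 1
    simpa using hp 0

private lemma shift_any (g : ℕ → ℂ) (m : ℕ) (hp : ∀ k, g (k + m) = g k) (c : ℕ) :
    ∑ k ∈ range m, g (k + c) = ∑ k ∈ range m, g k := by
  induction c with
  | zero => simp
  | succ n ih =>
    have h1 : ∑ k ∈ range m, g (k + (n + 1)) =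
        ∑ k ∈ range m, (fun k => g (k + n)) (k + 1) := by
      apply Finset.sum_congr rfl
      intro k _
      simp only []
      congr 1
      ring
    rw [h1, shift_one (fun k => g (k + n)) m ?_]
    · exact ih
    · intro k
      show g (k + m + n) = g (k + n)
      rw [show k + m + n = k + n + m by ring, hp]

private lemma sum_mod_shift (f : ℕ → ℂ) (d m b b' : ℕ) (hb : b % d = b' % d) :
    ∑ k ∈ range m, f ((b + k * d) % (d * m)) =
    ∑ k ∈ range m, f ((b' + k * d) % (d * m)) := by
  set g : ℕ → ℂ := fun k => f ((b % d + k * d) % (d * m)) with hg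
  have hper : ∀ k, g (k + m) = g k := by
    intro k
    simp only [hg]
    congr 1
    rw [show b % d + (k + m) * d = b % d + k * d + d * m by ring]
    exact Nat.add_mod_right _ _
  have h1 : ∀ (c : ℕ), c % d = b % d →
      ∑ k ∈ range m, f ((c + k * d) % (d * m)) = ∑ k ∈ range m, g k := by
    intro c hc
    have harg : ∀ k, f ((c + k * d) % (d * m)) = g (k + c / d) := by
      intro k
      simp only [hg]
      congr 2
      have hsplit : d * (c / d) + c % d = c := Nat.div_add_mod c d
      calc c + k * d = (d * (c / d) + c % d) + k * d := by rw [hsplit]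
        _ = b % d + (k + c / d) * d := by rw [hc]; ring
    rw [Finset.sum_congr rfl (fun k _ => harg k), shift_any g m hper (c / d)]
  rw [h1 b rfl, h1 b' hb.symm]

private lemma sum_grid (F : ℕ → ℂ) (d m : ℕ) :
    ∑ j ∈ range d, ∑ k ∈ range m, F (j + k * d) = ∑ J ∈ range (d * m), F J := by
  induction m with
  | zero => simp
  | succ n ih =>
    have h2 : ∀ j, (∑ k ∈ range (n + 1), F (j + k * d)) =
        ∑ k ∈ range n, F (j + k * d) + F (d * n + j) := by
      intro j
      rw [Finset.sum_range_succ]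
      congr 2
      ring
    rw [Finset.sum_congr rfl (fun j _ => h2 j), Finset.sum_add_distrib, ih,
      show d * (n + 1) = d * n + d by ring, Finset.sum_range_add]

/-- m-compressions of complementary complex sequences of length
v = dm are complementary sequences of length d. -/
theorem compression_of_complementary (d m t : ℕ) (hd : 0 < d) (hm : 0 < m)
    (v : ℕ) (hv : v = d * m) (A : Fin t → ℕ → ℂ)
    (hcomp : ∀ s : ℕ, s % v ≠ 0 →
      (∑ i, ∑ j ∈ Finset.range v, A i ((j + s) % v) * star (A i (j % v))) = 0)
    (Ad : Fin t → ℕ → ℂ)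
    (hAd : ∀ i j, Ad i j = ∑ k ∈ Finset.range m, A i ((j + k * d) % v)) :
    ∀ s : ℕ, s % d ≠ 0 →
      (∑ i, ∑ j ∈ Finset.range d, Ad i ((j + s) % d) * star (Ad i (j % d))) = 0 := by
  intro s hs
  have key : ∀ i : Fin t,
      ∑ j ∈ range d, Ad i ((j + s) % d) * star (Ad i (j % d)) =
      ∑ l ∈ range m, ∑ J ∈ range v,
        A i ((J + (s + l * d)) % v) * star (A i (J % v)) := by
    intro i
    have step : ∀ j ∈ range d,
        Ad i ((j + s) % d) * star (Ad i (j % d)) =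
        ∑ l ∈ range m, ∑ k' ∈ range m,
          A i ((j + k' * d + (s + l * d)) % v) * star (A i ((j + k' * d) % v)) := by
      intro j hj
      rw [mem_range] at hj
      rw [Nat.mod_eq_of_lt hj, hAd, hAd, star_sum, Finset.sum_mul_sum,
        Finset.sum_comm]
      have inner : ∀ k' ∈ range m,
          ∑ k ∈ range m,
            A i (((j + s) % d + k * d) % v) * star (A i ((j + k' * d) % v)) =
          ∑ l ∈ range m,
            A i ((j + k' * d + (s + l * d)) % v) * star (A i ((j + k' * d) % v)) := by
        intro k' _
        rw [← Finset.sum_mul, ← Finset.sum_mul]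
        congr 1
        have hb : ((j + s) % d) % d = (j + k' * d + s) % d := by
          rw [Nat.mod_mod_of_dvd _ dvd_rfl,
            show j + k' * d + s = j + s + k' * d by ring,
            Nat.add_mul_mod_self_right]
        have hms := sum_mod_shift (A i) d m ((j + s) % d) (j + k' * d + s) hb
        rw [hv]
        rw [hms]
        apply Finset.sum_congr rfl
        intro l _
        congr 2
        ring
      rw [Finset.sum_congr rfl inner]
      exact Finset.sum_comm
    rw [Finset.sum_congr rfl step, Finset.sum_comm]
    apply Finset.sum_congr rfl
    intro l _
    have hsg := sum_grid
      (fun J => A i ((J + (s + l * d)) % v) * star (A i (J % v))) d m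
    rw [hv]
    rw [hv] at hsg
    simpa using hsg
  have hmod : ∀ l : ℕ, (s + l * d) % v ≠ 0 := by
    intro l h
    apply hs
    have hvd : v ∣ s + l * d := Nat.dvd_of_mod_eq_zero h
    have hdd : d ∣ v := ⟨m, hv⟩
    have hdsl : d ∣ s + l * d := dvd_trans hdd hvd
    rw [add_comm] at hdsl
    have hds : d ∣ s := (Nat.dvd_add_right (dvd_mul_left d l)).mp hdsl
    exact Nat.mod_eq_zero_of_dvd hds
  rw [Finset.sum_congr rfl (fun i _ => key i), Finset.sum_comm]
  apply Finset.sum_eq_zero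
  intro l _
  exact hcomp (s + l * d) (hmod l)
end

section
/- Let (A, B) be a Golay pair of length g and (C, D) a periodic Golay pair of length v. Define E and F by E(z) = ½[A(z)+B(z)]C(z^g) + ½[A(z)−B(z)]D(z^{−g})z^{gv−g} and F(z) = ½[B(z)−A(z)]C(z^{−g})z^{gv−g} + ½[A(z)+B(z)]D(z^g). Then (E, F) is a periodic Golay pair of length gv. -/
open LaurentPolynomial Finset AddMonoidAlgebra

namespace Turyn

variable {M : Type*} [AddCommMonoid M]

lemma mul_sum_single (m n : ℕ) (φ ψ : ℕ → M) (u w : ℕ → ℤ) :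
    ((∑ i ∈ range m, (AddMonoidAlgebra.single (φ i) (u i) : AddMonoidAlgebra ℤ M)) *
      ∑ j ∈ range n, (AddMonoidAlgebra.single (ψ j) (w j) : AddMonoidAlgebra ℤ M))
      = ∑ i ∈ range m, ∑ j ∈ range n, AddMonoidAlgebra.single (φ i + ψ j) (u i * w j) := by
  rw [Finset.sum_mul]
  refine sum_congr rfl fun i _ => ?_
  rw [Finset.mul_sum]
  exact sum_congr rfl fun j _ => AddMonoidAlgebra.single_mul_single ..

lemma dsum_apply [DecidableEq M] (m n : ℕ) (φ : ℕ → ℕ → M) (u : ℕ → ℕ → ℤ) (t : M) :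
    (∑ i ∈ range m, ∑ j ∈ range n,
        (AddMonoidAlgebra.single (φ i j) (u i j) : AddMonoidAlgebra ℤ M)).coeff t
      = ∑ i ∈ range m, ∑ j ∈ range n, if φ i j = t then u i j else 0 := by
  rw [AddMonoidAlgebra.coeff_sum, Finsupp.finset_sum_apply]
  refine sum_congr rfl fun i _ => ?_
  rw [AddMonoidAlgebra.coeff_sum, Finsupp.finset_sum_apply]
  exact sum_congr rfl fun j _ => by simp [AddMonoidAlgebra.coeff_single, Finsupp.single_apply]

end Turyn

namespace Turyn
set_option linter.unusedSectionVars false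

lemma corr_pos (g s : ℕ) (u w : ℕ → ℤ) :
    (∑ j ∈ range g, ∑ j' ∈ range g,
        if (j : ℤ) + -(j' : ℤ) = (s : ℤ) then u j * w j' else 0)
      = ∑ j' ∈ range (g - s), u (j' + s) * w j' := by
  rw [Finset.sum_comm]
  have h1 : ∀ j' ∈ range g, (∑ j ∈ range g,
      if (j : ℤ) + -(j' : ℤ) = (s : ℤ) then u j * w j' else 0)
      = if j' + s ∈ range g then u (j' + s) * w j' else 0 := by
    intro j' _
    rw [← Finset.sum_ite_eq' (range g) (j' + s) (fun j => u j * w j')]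
    exact sum_congr rfl fun j _ => if_congr (by omega) rfl rfl
  rw [Finset.sum_congr rfl h1]
  rw [← Finset.sum_subset (Finset.range_subset_range.mpr (Nat.sub_le g s))
    (fun x _ hx => by rw [if_neg]; simp only [mem_range] at *; omega)]
  refine sum_congr rfl fun j' hj' => ?_
  rw [if_pos]; simp only [mem_range] at *; omega

lemma corr_neg (g s : ℕ) (u w : ℕ → ℤ) :
    (∑ j ∈ range g, ∑ j' ∈ range g,
        if (j : ℤ) + -(j' : ℤ) = -(s : ℤ) then u j * w j' else 0)
      = ∑ j ∈ range (g - s), u j * w (j + s) := by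
  have h1 : ∀ j ∈ range g, (∑ j' ∈ range g,
      if (j : ℤ) + -(j' : ℤ) = -(s : ℤ) then u j * w j' else 0)
      = if j + s ∈ range g then u j * w (j + s) else 0 := by
    intro j _
    rw [← Finset.sum_ite_eq' (range g) (j + s) (fun j' => u j * w j')]
    exact sum_congr rfl fun j' _ => if_congr (by omega) rfl rfl
  rw [Finset.sum_congr rfl h1]
  rw [← Finset.sum_subset (Finset.range_subset_range.mpr (Nat.sub_le g s))
    (fun x _ hx => by rw [if_neg]; simp only [mem_range] at *; omega)]
  refine sum_congr rfl fun j hj => ?_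
  rw [if_pos]; simp only [mem_range] at *; omega

lemma corr_far (g : ℕ) (k : ℤ) (hk : (g : ℤ) ≤ k ∨ k ≤ -(g : ℤ)) (F : ℕ → ℕ → ℤ) :
    (∑ j ∈ range g, ∑ j' ∈ range g,
        if (j : ℤ) + -(j' : ℤ) = k then F j j' else 0) = 0 := by
  refine Finset.sum_eq_zero fun j hj => Finset.sum_eq_zero fun j' hj' => ?_
  rw [if_neg]
  simp only [mem_range] at hj hj'
  omega

lemma golay_single (g : ℕ) (a b : ℕ → ℤ)
    (ha : ∀ j < g, a j = 1 ∨ a j = -1) (hb : ∀ j < g, b j = 1 ∨ b j = -1)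
    (hGolay : ∀ s, 1 ≤ s → s < g →
      (∑ j ∈ Finset.range (g - s), a j * a (j + s)) +
      (∑ j ∈ Finset.range (g - s), b j * b (j + s)) = 0) :
    ((∑ j ∈ range g, ∑ j' ∈ range g,
        (AddMonoidAlgebra.single ((j : ℤ) + -(j' : ℤ)) (a j * a j') : AddMonoidAlgebra ℤ ℤ))
      + ∑ j ∈ range g, ∑ j' ∈ range g,
        (AddMonoidAlgebra.single ((j : ℤ) + -(j' : ℤ)) (b j * b j') : AddMonoidAlgebra ℤ ℤ))
      = AddMonoidAlgebra.single (0 : ℤ) (2 * (g : ℤ)) := by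
  ext k
  rw [AddMonoidAlgebra.coeff_add, Finsupp.add_apply, dsum_apply, dsum_apply,
    AddMonoidAlgebra.coeff_single, Finsupp.single_apply]
  rcases lt_trichotomy k 0 with hk | hk | hk
  · -- k < 0
    rw [if_neg (by omega)]
    rcases le_or_gt (g : ℤ) (-k) with hgk | hgk
    · rw [corr_far g k (by omega), corr_far g k (by omega)]; ring
    · have hks : k = -(((-k).toNat : ℕ) : ℤ) := by omega
      rw [hks, corr_neg, corr_neg]
      have := hGolay (-k).toNat (by omega) (by omega)
      linarith
  · rw [if_pos (by omega)]
    have hk0 : k = ((0 : ℕ) : ℤ) := by omega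
    rw [hk0, corr_pos, corr_pos]
    have h1 : ∀ j ∈ range (g - 0), a (j + 0) * a j + b (j + 0) * b j = 2 := by
      intro j hj
      simp only [mem_range] at hj
      rcases ha j (by omega) with h | h <;> rcases hb j (by omega) with h' | h' <;>
        simp [h, h']
    calc (∑ j' ∈ range (g - 0), a (j' + 0) * a j') + ∑ j' ∈ range (g - 0), b (j' + 0) * b j'
        = ∑ j ∈ range (g - 0), (a (j + 0) * a j + b (j + 0) * b j) := by
          rw [Finset.sum_add_distrib]
      _ = ∑ _j ∈ range (g - 0), (2 : ℤ) := Finset.sum_congr rfl h1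
      _ = 2 * (g : ℤ) := by simp [mul_comm]
  · -- k > 0
    rw [if_neg (by omega)]
    rcases le_or_gt (g : ℤ) k with hgk | hgk
    · rw [corr_far g k (by omega), corr_far g k (by omega)]; ring
    · have hks : k = ((k.toNat : ℕ) : ℤ) := by omega
      rw [hks, corr_pos, corr_pos]
      have := hGolay k.toNat (by omega) (by omega)
      have e1 : ∀ j ∈ range (g - k.toNat), a (j + k.toNat) * a j = a j * a (j + k.toNat) :=
        fun j _ => mul_comm _ _
      have e2 : ∀ j ∈ range (g - k.toNat), b (j + k.toNat) * b j = b j * b (j + k.toNat) :=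
        fun j _ => mul_comm _ _
      rw [Finset.sum_congr rfl e1, Finset.sum_congr rfl e2]
      linarith

end Turyn

namespace Turyn
set_option linter.unusedSectionVars false

lemma mod_small (v x : ℕ) (hv : 0 < v) (hx : x < 2 * v) :
    x % v = if x < v then x else x - v := by
  split_ifs with h
  · exact Nat.mod_eq_of_lt h
  · rw [Nat.mod_eq_sub_mod (le_of_not_gt h), Nat.mod_eq_of_lt (by omega)]

lemma reindex_mod (v : ℕ) (hv : 0 < v) (q' : ℕ) (hq' : q' < v) {β : Type*} [AddCommMonoid β]
    (f : ℕ → β) : ∑ q ∈ range v, f q = ∑ s ∈ range v, f ((q' + s) % v) := by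
  refine Finset.sum_nbij' (fun q => (q + (v - q')) % v) (fun s => (q' + s) % v) ?_ ?_ ?_ ?_ ?_
  · intro q hq; simp only [mem_range] at *; exact Nat.mod_lt _ hv
  · intro s hs; simp only [mem_range] at *; exact Nat.mod_lt _ hv
  · intro q hq
    simp only [mem_range] at hq
    show (q' + (q + (v - q')) % v) % v = q
    rw [mod_small v (q + (v - q')) hv (by omega)]
    split_ifs with h
    · rw [mod_small v _ hv (by omega)]; split_ifs <;> omega
    · rw [mod_small v _ hv (by omega)]; split_ifs <;> omega
  · intro s hs
    simp only [mem_range] at hs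
    show ((q' + s) % v + (v - q')) % v = s
    rw [mod_small v (q' + s) hv (by omega)]
    split_ifs with h
    · rw [mod_small v _ hv (by omega)]; split_ifs <;> omega
    · rw [mod_small v _ hv (by omega)]; split_ifs <;> omega
  · intro q hq
    simp only [mem_range] at hq
    congr 1
    show q = (q' + (q + (v - q')) % v) % v
    symm
    rw [mod_small v (q + (v - q')) hv (by omega)]
    split_ifs with h
    · rw [mod_small v _ hv (by omega)]; split_ifs <;> omega
    · rw [mod_small v _ hv (by omega)]; split_ifs <;> omega

lemma exp_eq2 (g v : ℕ) (hv : 0 < v) (s q' : ℕ) (hs : s < v) (hq' : q' < v) :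
    (((g : ℤ) * (((q' + s) % v : ℕ) : ℤ) - (g : ℤ) * q' : ℤ) : ZMod (g * v))
      = (((g : ℤ) * s : ℤ) : ZMod (g * v)) := by
  rw [mod_small v (q' + s) hv (by omega)]
  split_ifs with h
  · congr 1; push_cast; ring
  · have : ((g : ℤ) * ((q' + s - v : ℕ) : ℤ) - (g : ℤ) * q')
        = (g : ℤ) * s + -(((g * v : ℕ) : ℤ)) := by
      push_cast [Nat.cast_sub (by omega : v ≤ q' + s)]
      ring
    rw [this, Int.cast_add, Int.cast_neg, Int.cast_natCast, ZMod.natCast_self, neg_zero,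
      add_zero]

lemma shift_reindex (g v : ℕ) (hv : 0 < v) (u w : ℕ → ℤ) :
    (∑ q ∈ range v, ∑ q' ∈ range v,
        (AddMonoidAlgebra.single ((((g : ℤ) * q - (g : ℤ) * q' : ℤ)) : ZMod (g * v))
          (u q * w q') : AddMonoidAlgebra ℤ (ZMod (g * v))))
      = ∑ s ∈ range v, AddMonoidAlgebra.single ((((g : ℤ) * s : ℤ)) : ZMod (g * v))
          (∑ q' ∈ range v, u ((q' + s) % v) * w q') := by
  rw [Finset.sum_comm]
  have key : ∀ q' ∈ range v, (∑ q ∈ range v,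
      (AddMonoidAlgebra.single ((((g : ℤ) * q - (g : ℤ) * q' : ℤ)) : ZMod (g * v))
        (u q * w q') : AddMonoidAlgebra ℤ (ZMod (g * v))))
      = ∑ s ∈ range v, AddMonoidAlgebra.single ((((g : ℤ) * s : ℤ)) : ZMod (g * v))
          (u ((q' + s) % v) * w q') := by
    intro q' hq'
    simp only [mem_range] at hq'
    rw [reindex_mod v hv q' hq'
      (f := fun q => (AddMonoidAlgebra.single ((((g : ℤ) * q - (g : ℤ) * q' : ℤ)) : ZMod (g * v))
        (u q * w q') : AddMonoidAlgebra ℤ (ZMod (g * v))))]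
    exact Finset.sum_congr rfl fun s hs => by
      rw [exp_eq2 g v hv s q' (by simpa using hs) hq']
  rw [Finset.sum_congr rfl key, Finset.sum_comm]
  exact Finset.sum_congr rfl fun s _ => (map_sum (AddMonoidAlgebra.singleAddHom _) _ _).symm

end Turyn

namespace Turyn
set_option linter.unusedSectionVars false

lemma pgolay_single (g v : ℕ) (hg : 0 < g) (hv : 0 < v) (c d : ℕ → ℤ)
    (hc : ∀ j < v, c j = 1 ∨ c j = -1) (hd : ∀ j < v, d j = 1 ∨ d j = -1)
    (hPGolay : ∀ s, 0 < s → s < v →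
      (∑ j ∈ Finset.range v, c ((j + s) % v) * c j) +
      (∑ j ∈ Finset.range v, d ((j + s) % v) * d j) = 0) :
    ((∑ q ∈ range v, ∑ q' ∈ range v,
        (AddMonoidAlgebra.single ((((g : ℤ) * q - (g : ℤ) * q' : ℤ)) : ZMod (g * v))
          (c q * c q') : AddMonoidAlgebra ℤ (ZMod (g * v))))
      + ∑ q ∈ range v, ∑ q' ∈ range v,
        (AddMonoidAlgebra.single ((((g : ℤ) * q - (g : ℤ) * q' : ℤ)) : ZMod (g * v))
          (d q * d q') : AddMonoidAlgebra ℤ (ZMod (g * v))))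
      = AddMonoidAlgebra.single (0 : ZMod (g * v)) (2 * (v : ℤ)) := by
  rw [shift_reindex g v hv c c, shift_reindex g v hv d d, ← Finset.sum_add_distrib]
  have hterm : ∀ s ∈ range v,
      (AddMonoidAlgebra.single ((((g : ℤ) * s : ℤ)) : ZMod (g * v))
          (∑ q' ∈ range v, c ((q' + s) % v) * c q')
        + AddMonoidAlgebra.single ((((g : ℤ) * s : ℤ)) : ZMod (g * v))
          (∑ q' ∈ range v, d ((q' + s) % v) * d q')
        : AddMonoidAlgebra ℤ (ZMod (g * v)))
      = AddMonoidAlgebra.single ((((g : ℤ) * s : ℤ)) : ZMod (g * v))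
          ((∑ q' ∈ range v, c ((q' + s) % v) * c q')
            + ∑ q' ∈ range v, d ((q' + s) % v) * d q') := by
    intro s _
    exact (AddMonoidAlgebra.single_add _ _ _).symm
  rw [Finset.sum_congr rfl hterm]
  rw [Finset.sum_eq_single_of_mem 0 (by simpa using hv)
    (fun s hs' hs => by
      rw [hPGolay s (Nat.pos_of_ne_zero hs) (by simpa using hs')]
      exact AddMonoidAlgebra.single_zero _)]
  have e0 : ((((g : ℤ) * (0 : ℕ) : ℤ)) : ZMod (g * v)) = 0 := by push_cast; ring
  rw [e0]
  congr 1
  have hc1 : ∀ q' ∈ range v, c ((q' + 0) % v) * c q' = 1 := by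
    intro q' hq'
    simp only [mem_range] at hq'
    rw [Nat.add_zero, Nat.mod_eq_of_lt hq']
    rcases hc q' hq' with h | h <;> simp [h]
  have hd1 : ∀ q' ∈ range v, d ((q' + 0) % v) * d q' = 1 := by
    intro q' hq'
    simp only [mem_range] at hq'
    rw [Nat.add_zero, Nat.mod_eq_of_lt hq']
    rcases hd q' hq' with h | h <;> simp [h]
  rw [Finset.sum_congr rfl hc1, Finset.sum_congr rfl hd1]
  simp; ring

noncomputable def sig : LaurentPolynomial ℤ →+* LaurentPolynomial ℤ :=
  AddMonoidAlgebra.mapDomainRingHom ℤ (negAddMonoidHom : ℤ →+ ℤ)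

lemma sig_single (m : ℤ) (r : ℤ) :
    sig (AddMonoidAlgebra.single m r) = AddMonoidAlgebra.single (-m) r := by
  show AddMonoidAlgebra.mapDomain (⇑(negAddMonoidHom : ℤ →+ ℤ)) (AddMonoidAlgebra.single m r) = _
  rw [AddMonoidAlgebra.mapDomain_single]
  rfl

lemma sig_sum_single (m : ℕ) (φ : ℕ → ℤ) (u : ℕ → ℤ) :
    sig (∑ i ∈ range m, (AddMonoidAlgebra.single (φ i) (u i) : LaurentPolynomial ℤ))
      = ∑ i ∈ range m, AddMonoidAlgebra.single (-φ i) (u i) := by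
  rw [map_sum]
  exact sum_congr rfl fun i _ => sig_single _ _

noncomputable def pii (N : ℕ) : LaurentPolynomial ℤ →+* AddMonoidAlgebra ℤ (ZMod N) :=
  AddMonoidAlgebra.mapDomainRingHom ℤ (Int.castAddHom (ZMod N))

lemma pii_single (N : ℕ) (m : ℤ) (r : ℤ) :
    pii N (AddMonoidAlgebra.single m r) = AddMonoidAlgebra.single ((m : ZMod N)) r := by
  show AddMonoidAlgebra.mapDomain (⇑(Int.castAddHom (ZMod N))) (AddMonoidAlgebra.single m r) = _
  rw [AddMonoidAlgebra.mapDomain_single]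
  rfl

lemma pii_sum_single (N : ℕ) (m : ℕ) (φ : ℕ → ℤ) (u : ℕ → ℤ) :
    pii N (∑ i ∈ range m, (AddMonoidAlgebra.single (φ i) (u i) : LaurentPolynomial ℤ))
      = ∑ i ∈ range m, AddMonoidAlgebra.single ((φ i : ZMod N)) (u i) := by
  rw [map_sum]
  exact sum_congr rfl fun i _ => pii_single _ _ _

lemma sum_mul_reindex {β : Type*} [AddCommMonoid β] (g v : ℕ) (F : ℕ → β) :
    ∑ i ∈ range (g * v), F i = ∑ q ∈ range v, ∑ j ∈ range g, F (g * q + j) := by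
  induction v with
  | zero => simp
  | succ v ih => rw [Nat.mul_succ, Finset.sum_range_add, ih, Finset.sum_range_succ]

end Turyn

namespace Turyn
set_option linter.unusedSectionVars false

lemma corr_apply_mod (N : ℕ) (hN : 0 < N) (s : ℕ) (F : ℕ → ℕ → ℤ) :
    (∑ i ∈ range N, ∑ j ∈ range N,
        if (((i : ℕ) : ℤ) : ZMod N) + (((-(j : ℤ)) : ℤ) : ZMod N) = ((s : ℕ) : ZMod N)
        then F i j else 0)
      = ∑ j ∈ range N, F ((j + s) % N) j := by
  rw [Finset.sum_comm]
  refine sum_congr rfl fun j hj => ?_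
  simp only [mem_range] at hj
  have hmem : (j + s) % N ∈ range N := by
    simp only [mem_range]; exact Nat.mod_lt _ hN
  have hrw := Finset.sum_ite_eq' (range N) ((j + s) % N) (fun i => F i j)
  rw [if_pos hmem] at hrw
  rw [← hrw]
  refine sum_congr rfl fun i hi => if_congr ?_ rfl rfl
  simp only [mem_range] at hi
  have lhs_eq : (((i : ℕ) : ℤ) : ZMod N) + (((-(j : ℤ)) : ℤ) : ZMod N)
      = (i : ZMod N) - (j : ZMod N) := by push_cast; ring
  rw [lhs_eq, sub_eq_iff_eq_add]
  have hr : ((s : ℕ) : ZMod N) + (j : ZMod N) = (((j + s) % N : ℕ) : ZMod N) := by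
    rw [ZMod.natCast_mod]; push_cast; ring
  rw [hr, ZMod.natCast_eq_natCast_iff]
  show (i % N = (j + s) % N % N) ↔ _
  rw [Nat.mod_eq_of_lt hi, Nat.mod_mod_of_dvd _ dvd_rfl]

lemma reflect_reindex {β : Type*} [AddCommMonoid β] (v : ℕ) (F : ℕ → β) :
    ∑ Q ∈ range v, F Q = ∑ Q ∈ range v, F (v - 1 - Q) := by
  refine Finset.sum_nbij' (fun Q => v - 1 - Q) (fun Q => v - 1 - Q) ?_ ?_ ?_ ?_ ?_
  · intro Q hQ; simp only [mem_range] at *; omega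
  · intro Q hQ; simp only [mem_range] at *; omega
  · intro Q hQ; simp only [mem_range] at *; show v - 1 - (v - 1 - Q) = Q; omega
  · intro Q hQ; simp only [mem_range] at *; show v - 1 - (v - 1 - Q) = Q; omega
  · intro Q hQ
    simp only [mem_range] at hQ
    show F Q = F (v - 1 - (v - 1 - Q))
    congr 1
    omega

lemma two_single (M : Type*) [AddCommMonoid M] :
    (2 : AddMonoidAlgebra ℤ M) = AddMonoidAlgebra.single (0 : M) 2 := by
  have h1 : (2 : AddMonoidAlgebra ℤ M) = 1 + 1 := by norm_num
  rw [h1, AddMonoidAlgebra.one_def, ← AddMonoidAlgebra.single_add]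
  norm_num

lemma key_identity (g v : ℕ) (hg : 0 < g) (hv : 0 < v) (p q cs ds w : ℕ → ℤ)
    (hw : ∀ Q < v, ∀ j < g, 2 * w (g * Q + j) = p j * cs Q + q j * ds (v - 1 - Q)) :
    (2 : LaurentPolynomial ℤ) * (∑ i ∈ range (g * v), AddMonoidAlgebra.single ((i : ℤ)) (w i))
      = (∑ j ∈ range g, (AddMonoidAlgebra.single ((j : ℤ)) (p j) : LaurentPolynomial ℤ)) *
          (∑ Q ∈ range v, AddMonoidAlgebra.single ((g : ℤ) * Q) (cs Q))
        + (∑ j ∈ range g, (AddMonoidAlgebra.single ((j : ℤ)) (q j) : LaurentPolynomial ℤ)) *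
          (∑ Q ∈ range v, AddMonoidAlgebra.single (-((g : ℤ) * Q)) (ds Q)) *
          AddMonoidAlgebra.single ((g : ℤ) * v - (g : ℤ)) 1 := by
  rw [mul_sum_single g v _ _ p cs, mul_sum_single g v _ _ q ds, Finset.sum_mul]
  have hstep : ∀ j ∈ range g,
      (∑ Q ∈ range v, (AddMonoidAlgebra.single ((j : ℤ) + -((g : ℤ) * Q)) (q j * ds Q)
          : LaurentPolynomial ℤ)) * AddMonoidAlgebra.single ((g : ℤ) * v - (g : ℤ)) 1
      = ∑ Q ∈ range v,
          AddMonoidAlgebra.single ((j : ℤ) + (g : ℤ) * Q) (q j * ds (v - 1 - Q)) := by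
    intro j _
    rw [Finset.sum_mul]
    rw [reflect_reindex v (fun Q =>
      (AddMonoidAlgebra.single ((j : ℤ) + -((g : ℤ) * Q)) (q j * ds Q) : LaurentPolynomial ℤ)
        * AddMonoidAlgebra.single ((g : ℤ) * v - (g : ℤ)) 1)]
    refine sum_congr rfl fun Q hQ => ?_
    simp only [mem_range] at hQ
    rw [AddMonoidAlgebra.single_mul_single, mul_one]
    congr 1
    have hcast : ((v - 1 - Q : ℕ) : ℤ) = (v : ℤ) - 1 - Q := by omega
    rw [hcast]; ring
  rw [Finset.sum_congr rfl hstep, ← Finset.sum_add_distrib]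
  have hcomb : ∀ j ∈ range g,
      ((∑ Q ∈ range v, (AddMonoidAlgebra.single ((j : ℤ) + (g : ℤ) * Q) (p j * cs Q)
          : LaurentPolynomial ℤ))
        + ∑ Q ∈ range v,
            AddMonoidAlgebra.single ((j : ℤ) + (g : ℤ) * Q) (q j * ds (v - 1 - Q)))
      = ∑ Q ∈ range v, AddMonoidAlgebra.single ((j : ℤ) + (g : ℤ) * Q)
          (p j * cs Q + q j * ds (v - 1 - Q)) := by
    intro j _
    rw [← Finset.sum_add_distrib]
    exact sum_congr rfl fun Q _ => (AddMonoidAlgebra.single_add _ _ _).symm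
  rw [Finset.sum_congr rfl hcomb]
  -- now handle LHS
  rw [Finset.mul_sum]
  have hL : ∀ i ∈ range (g * v),
      (2 : LaurentPolynomial ℤ) * AddMonoidAlgebra.single ((i : ℤ)) (w i)
        = AddMonoidAlgebra.single ((i : ℤ)) (2 * w i) := by
    intro i _
    rw [two_single, AddMonoidAlgebra.single_mul_single, zero_add]
  rw [Finset.sum_congr rfl hL]
  rw [sum_mul_reindex g v (fun i => (AddMonoidAlgebra.single ((i : ℤ)) (2 * w i)
    : LaurentPolynomial ℤ))]
  rw [Finset.sum_comm]
  refine sum_congr rfl fun j hj => sum_congr rfl fun Q hQ => ?_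
  simp only [mem_range] at hj hQ
  rw [hw Q hQ j hj]
  congr 1
  push_cast
  ring

end Turyn

open Turyn in
/-- Turyn multiplication of a Golay pair (A,B) of length g with a
periodic Golay pair (C,D) of length v yields a periodic Golay pair (E,F) of
length gv, where E(z) = ½[A(z)+B(z)]C(z^g) + ½[A(z)-B(z)]D(z^{-g})z^{gv-g} and
F(z) = ½[B(z)-A(z)]C(z^{-g})z^{gv-g} + ½[A(z)+B(z)]D(z^g). -/
theorem turyn_multiplication_periodic_golay (g v : ℕ) (hg : 0 < g) (hv : 0 < v)
    (a b c d : ℕ → ℤ)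
    (ha : ∀ j < g, a j = 1 ∨ a j = -1) (hb : ∀ j < g, b j = 1 ∨ b j = -1)
    (hc : ∀ j < v, c j = 1 ∨ c j = -1) (hd : ∀ j < v, d j = 1 ∨ d j = -1)
    (hGolay : ∀ s, 1 ≤ s → s < g →
      (∑ j ∈ Finset.range (g - s), a j * a (j + s)) +
      (∑ j ∈ Finset.range (g - s), b j * b (j + s)) = 0)
    (hPGolay : ∀ s, 0 < s → s < v →
      (∑ j ∈ Finset.range v, c ((j + s) % v) * c j) +
      (∑ j ∈ Finset.range v, d ((j + s) % v) * d j) = 0) :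
    ∃ e f : ℕ → ℤ,
      (∀ i < g * v, e i = 1 ∨ e i = -1) ∧
      (∀ i < g * v, f i = 1 ∨ f i = -1) ∧
      (2 * (∑ j ∈ Finset.range (g * v), C (e j) * T (j : ℤ)) =
        ((∑ j ∈ Finset.range g, C (a j) * T (j : ℤ)) +
         (∑ j ∈ Finset.range g, C (b j) * T (j : ℤ))) *
          (∑ j ∈ Finset.range v, C (c j) * T ((g : ℤ) * j)) +
        ((∑ j ∈ Finset.range g, C (a j) * T (j : ℤ)) -
         (∑ j ∈ Finset.range g, C (b j) * T (j : ℤ))) *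
          (∑ j ∈ Finset.range v, C (d j) * T (-((g : ℤ) * j))) *
          T ((g : ℤ) * v - g)) ∧
      (2 * (∑ j ∈ Finset.range (g * v), C (f j) * T (j : ℤ)) =
        ((∑ j ∈ Finset.range g, C (b j) * T (j : ℤ)) -
         (∑ j ∈ Finset.range g, C (a j) * T (j : ℤ))) *
          (∑ j ∈ Finset.range v, C (c j) * T (-((g : ℤ) * j))) *
          T ((g : ℤ) * v - g) +
        ((∑ j ∈ Finset.range g, C (a j) * T (j : ℤ)) +
         (∑ j ∈ Finset.range g, C (b j) * T (j : ℤ))) *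
          (∑ j ∈ Finset.range v, C (d j) * T ((g : ℤ) * j))) ∧
      (∀ s, 0 < s → s < g * v →
        (∑ j ∈ Finset.range (g * v), e ((j + s) % (g * v)) * e j) +
        (∑ j ∈ Finset.range (g * v), f ((j + s) % (g * v)) * f j) = 0) := by
  classical
  have hN : 0 < g * v := Nat.mul_pos hg hv
  set e : ℕ → ℤ := fun i => if a (i % g) = b (i % g) then a (i % g) * c (i / g)
      else a (i % g) * d (v - 1 - i / g) with he_def
  set f : ℕ → ℤ := fun i => if a (i % g) = b (i % g) then a (i % g) * d (i / g)
      else -(a (i % g) * c (v - 1 - i / g)) with hf_def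
  have hig : ∀ i, i < g * v → i % g < g ∧ i / g < v ∧ v - 1 - i / g < v := by
    intro i hi
    refine ⟨Nat.mod_lt _ hg, ?_, lt_of_le_of_lt (Nat.sub_le _ _) (by omega)⟩
    exact Nat.div_lt_of_lt_mul (by rw [mul_comm] at hi ⊢; exact hi)
  have hepm : ∀ i < g * v, e i = 1 ∨ e i = -1 := by
    intro i hi
    obtain ⟨h1, h2, h3⟩ := hig i hi
    by_cases hab : a (i % g) = b (i % g)
    · have hei : e i = a (i % g) * c (i / g) := by simp only [he_def]; rw [if_pos hab]
      rw [hei]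
      rcases ha _ h1 with h | h <;> rcases hc _ h2 with h' | h' <;> rw [h, h'] <;> norm_num
    · have hei : e i = a (i % g) * d (v - 1 - i / g) := by simp only [he_def]; rw [if_neg hab]
      rw [hei]
      rcases ha _ h1 with h | h <;> rcases hd _ h3 with h' | h' <;> rw [h, h'] <;> norm_num
  have hfpm : ∀ i < g * v, f i = 1 ∨ f i = -1 := by
    intro i hi
    obtain ⟨h1, h2, h3⟩ := hig i hi
    by_cases hab : a (i % g) = b (i % g)
    · have hfi : f i = a (i % g) * d (i / g) := by simp only [hf_def]; rw [if_pos hab]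
      rw [hfi]
      rcases ha _ h1 with h | h <;> rcases hd _ h2 with h' | h' <;> rw [h, h'] <;> norm_num
    · have hfi : f i = -(a (i % g) * c (v - 1 - i / g)) := by
        simp only [hf_def]; rw [if_neg hab]
      rw [hfi]
      rcases ha _ h1 with h | h <;> rcases hc _ h3 with h' | h' <;> rw [h, h'] <;> norm_num
  have hmoddiv : ∀ Q < v, ∀ j < g, (g * Q + j) % g = j ∧ (g * Q + j) / g = Q := by
    intro Q _ j hj
    constructor
    · rw [Nat.mul_add_mod, Nat.mod_eq_of_lt hj]
    · rw [Nat.mul_add_div hg, Nat.div_eq_of_lt hj, add_zero]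
  have he2 : ∀ Q < v, ∀ j < g,
      2 * e (g * Q + j) = (a j + b j) * c Q + (a j - b j) * d (v - 1 - Q) := by
    intro Q hQ j hj
    obtain ⟨hm, hdv⟩ := hmoddiv Q hQ j hj
    by_cases hab : a j = b j
    · simp only [he_def, hm, hdv, if_pos hab]
      rw [hab]; ring
    · have hb' : b j = -a j := by
        rcases ha _ hj with h | h <;> rcases hb _ hj with h' | h' <;> omega
      simp only [he_def, hm, hdv, if_neg hab]
      rw [hb']; ring
  have hf2 : ∀ Q < v, ∀ j < g,
      2 * f (g * Q + j) = (a j + b j) * d Q + (b j - a j) * c (v - 1 - Q) := by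
    intro Q hQ j hj
    obtain ⟨hm, hdv⟩ := hmoddiv Q hQ j hj
    by_cases hab : a j = b j
    · simp only [hf_def, hm, hdv, if_pos hab]
      rw [hab]; ring
    · have hb' : b j = -a j := by
        rcases ha _ hj with h | h <;> rcases hb _ hj with h' | h' <;> omega
      simp only [hf_def, hm, hdv, if_neg hab]
      rw [hb']; ring
  have hE := key_identity g v hg hv (fun j => a j + b j) (fun j => a j - b j) c d e he2
  have hF := key_identity g v hg hv (fun j => a j + b j) (fun j => b j - a j) d c f hf2
  -- sum splitting lemmas
  have hPsum : (∑ j ∈ range g, (AddMonoidAlgebra.single ((j : ℤ)) (a j + b j)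
        : LaurentPolynomial ℤ))
      = (∑ j ∈ range g, (AddMonoidAlgebra.single ((j : ℤ)) (a j) : LaurentPolynomial ℤ))
        + ∑ j ∈ range g, (AddMonoidAlgebra.single ((j : ℤ)) (b j) : LaurentPolynomial ℤ) := by
    rw [← Finset.sum_add_distrib]
    exact sum_congr rfl fun j _ => AddMonoidAlgebra.single_add _ _ _
  have hQsum : (∑ j ∈ range g, (AddMonoidAlgebra.single ((j : ℤ)) (a j - b j)
        : LaurentPolynomial ℤ))
      = (∑ j ∈ range g, (AddMonoidAlgebra.single ((j : ℤ)) (a j) : LaurentPolynomial ℤ))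
        - ∑ j ∈ range g, (AddMonoidAlgebra.single ((j : ℤ)) (b j) : LaurentPolynomial ℤ) := by
    rw [← Finset.sum_sub_distrib]
    exact sum_congr rfl fun j _ => AddMonoidAlgebra.single_sub _ _ _
  have hQsum2 : (∑ j ∈ range g, (AddMonoidAlgebra.single ((j : ℤ)) (b j - a j)
        : LaurentPolynomial ℤ))
      = (∑ j ∈ range g, (AddMonoidAlgebra.single ((j : ℤ)) (b j) : LaurentPolynomial ℤ))
        - ∑ j ∈ range g, (AddMonoidAlgebra.single ((j : ℤ)) (a j) : LaurentPolynomial ℤ) := by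
    rw [← Finset.sum_sub_distrib]
    exact sum_congr rfl fun j _ => AddMonoidAlgebra.single_sub _ _ _
  have hT : (T ((g : ℤ) * v - g) : LaurentPolynomial ℤ)
      = AddMonoidAlgebra.single ((g : ℤ) * v - (g : ℤ)) 1 := by
    rw [single_eq_C_mul_T, map_one, one_mul]
  beta_reduce at hE hF
  rw [hPsum, hQsum] at hE
  rw [hPsum, hQsum2, add_comm] at hF
  refine ⟨e, f, hepm, hfpm, ?_, ?_, ?_⟩
  · simp only [← single_eq_C_mul_T]
    rw [hT]
    exact hE
  · simp only [← single_eq_C_mul_T]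
    rw [hT]
    exact hF
  · -- the periodic correlation property
    intro s hs0 hsN
    -- star versions
    have hEs := congrArg sig hE
    have hFs := congrArg sig hF
    simp only [map_mul, map_add, map_sub, map_ofNat, sig_sum_single, sig_single, neg_neg]
      at hEs hFs
    -- Golay property as a Laurent identity
    have hGol : ((∑ j ∈ range g, (AddMonoidAlgebra.single ((j : ℤ)) (a j) : LaurentPolynomial ℤ))
          * ∑ j ∈ range g, (AddMonoidAlgebra.single (-(j : ℤ)) (a j) : LaurentPolynomial ℤ))
        + ((∑ j ∈ range g, (AddMonoidAlgebra.single ((j : ℤ)) (b j) : LaurentPolynomial ℤ))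
          * ∑ j ∈ range g, (AddMonoidAlgebra.single (-(j : ℤ)) (b j) : LaurentPolynomial ℤ))
        = AddMonoidAlgebra.single (0 : ℤ) (2 * (g : ℤ)) := by
      rw [mul_sum_single g g (fun j => (j : ℤ)) (fun j => -(j : ℤ)) a a,
        mul_sum_single g g (fun j => (j : ℤ)) (fun j => -(j : ℤ)) b b]
      exact golay_single g a b ha hb hGolay
    have htt' : (AddMonoidAlgebra.single ((g : ℤ) * v - (g : ℤ)) 1 : LaurentPolynomial ℤ)
        * AddMonoidAlgebra.single (-((g : ℤ) * v - (g : ℤ))) 1 = 1 := by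
      rw [AddMonoidAlgebra.single_mul_single, add_neg_cancel, mul_one,
        AddMonoidAlgebra.one_def]
    set LA := ∑ j ∈ range g, (AddMonoidAlgebra.single ((j : ℤ)) (a j) : LaurentPolynomial ℤ)
      with hLA
    set LB := ∑ j ∈ range g, (AddMonoidAlgebra.single ((j : ℤ)) (b j) : LaurentPolynomial ℤ)
      with hLB
    set LA' := ∑ j ∈ range g, (AddMonoidAlgebra.single (-(j : ℤ)) (a j) : LaurentPolynomial ℤ)
      with hLA'
    set LB' := ∑ j ∈ range g, (AddMonoidAlgebra.single (-(j : ℤ)) (b j) : LaurentPolynomial ℤ)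
      with hLB'
    set LC := ∑ Q ∈ range v, (AddMonoidAlgebra.single ((g : ℤ) * Q) (c Q) : LaurentPolynomial ℤ)
      with hLC
    set LD := ∑ Q ∈ range v, (AddMonoidAlgebra.single ((g : ℤ) * Q) (d Q) : LaurentPolynomial ℤ)
      with hLD
    set LC' := ∑ Q ∈ range v,
      (AddMonoidAlgebra.single (-((g : ℤ) * Q)) (c Q) : LaurentPolynomial ℤ) with hLC'
    set LD' := ∑ Q ∈ range v,
      (AddMonoidAlgebra.single (-((g : ℤ) * Q)) (d Q) : LaurentPolynomial ℤ) with hLD'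
    set LE := ∑ i ∈ range (g * v),
      (AddMonoidAlgebra.single ((i : ℤ)) (e i) : LaurentPolynomial ℤ) with hLE
    set LF := ∑ i ∈ range (g * v),
      (AddMonoidAlgebra.single ((i : ℤ)) (f i) : LaurentPolynomial ℤ) with hLF
    set LE' := ∑ i ∈ range (g * v),
      (AddMonoidAlgebra.single (-(i : ℤ)) (e i) : LaurentPolynomial ℤ) with hLE'
    set LF' := ∑ i ∈ range (g * v),
      (AddMonoidAlgebra.single (-(i : ℤ)) (f i) : LaurentPolynomial ℤ) with hLF'
    set t1 := (AddMonoidAlgebra.single ((g : ℤ) * v - (g : ℤ)) 1 : LaurentPolynomial ℤ) with ht1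
    set t2 := (AddMonoidAlgebra.single (-((g : ℤ) * v - (g : ℤ))) 1 : LaurentPolynomial ℤ)
      with ht2
    have hfour : 4 * (LE * LE' + LF * LF')
        = 2 * AddMonoidAlgebra.single (0 : ℤ) (2 * (g : ℤ)) * (LC * LC' + LD * LD') := by
      rw [← hGol]
      have expand : (2 * LE) * (2 * LE') + (2 * LF) * (2 * LF')
          = 2 * (LA * LA' + LB * LB') * (LC * LC' + LD * LD') := by
        rw [hE, hEs, hF, hFs]
        linear_combination ((LA - LB) * (LA' - LB') * (LC * LC' + LD * LD')) * htt'
      linear_combination expand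
    -- push into ZMod (g*v)
    rw [hLC, hLD, hLC', hLD', hLE, hLF, hLE', hLF'] at hfour
    have hpi := congrArg (pii (g * v)) hfour
    simp only [map_mul, map_add, map_ofNat, pii_sum_single, pii_single, Int.cast_zero] at hpi
    have hconv : ∀ u w : ℕ → ℤ,
        (∑ q ∈ range v, ∑ q' ∈ range v,
          (AddMonoidAlgebra.single
            ((((g : ℤ) * q : ℤ) : ZMod (g * v)) + (((-(((g : ℤ) * q')) : ℤ)) : ZMod (g * v)))
            (u q * w q') : AddMonoidAlgebra ℤ (ZMod (g * v))))
        = ∑ q ∈ range v, ∑ q' ∈ range v,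
            AddMonoidAlgebra.single ((((g : ℤ) * q - (g : ℤ) * q' : ℤ)) : ZMod (g * v))
              (u q * w q') := by
      intro u w
      refine sum_congr rfl fun q _ => sum_congr rfl fun q' _ => ?_
      congr 1
      push_cast
      ring
    have hPCD : ((∑ Q ∈ range v, (AddMonoidAlgebra.single ((((g : ℤ) * Q : ℤ)) : ZMod (g * v))
            (c Q) : AddMonoidAlgebra ℤ (ZMod (g * v))))
          * ∑ Q ∈ range v, AddMonoidAlgebra.single (((-((g : ℤ) * Q) : ℤ)) : ZMod (g * v)) (c Q))
        + ((∑ Q ∈ range v, (AddMonoidAlgebra.single ((((g : ℤ) * Q : ℤ)) : ZMod (g * v))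
            (d Q) : AddMonoidAlgebra ℤ (ZMod (g * v))))
          * ∑ Q ∈ range v, AddMonoidAlgebra.single (((-((g : ℤ) * Q) : ℤ)) : ZMod (g * v)) (d Q))
        = AddMonoidAlgebra.single (0 : ZMod (g * v)) (2 * (v : ℤ)) := by
      rw [mul_sum_single v v (fun q => (((g : ℤ) * q : ℤ) : ZMod (g * v)))
          (fun q => ((-((g : ℤ) * q) : ℤ) : ZMod (g * v))) c c,
        mul_sum_single v v (fun q => (((g : ℤ) * q : ℤ) : ZMod (g * v)))
          (fun q => ((-((g : ℤ) * q) : ℤ) : ZMod (g * v))) d d,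
        hconv c c, hconv d d]
      exact pgolay_single g v hg hv c d hc hd hPGolay
    rw [hPCD] at hpi
    have hconst : (2 : AddMonoidAlgebra ℤ (ZMod (g * v)))
        * AddMonoidAlgebra.single (0 : ZMod (g * v)) (2 * (g : ℤ))
        * AddMonoidAlgebra.single (0 : ZMod (g * v)) (2 * (v : ℤ))
        = AddMonoidAlgebra.single (0 : ZMod (g * v)) (8 * ((g : ℤ) * (v : ℤ))) := by
      rw [two_single, AddMonoidAlgebra.single_mul_single, AddMonoidAlgebra.single_mul_single]
      congr 1
      · simp
      · ring
    rw [hconst] at hpi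
    rw [mul_sum_single (g * v) (g * v) (fun i => (((i : ℤ)) : ZMod (g * v)))
        (fun j => ((-(j : ℤ) : ℤ) : ZMod (g * v))) e e,
      mul_sum_single (g * v) (g * v) (fun i => (((i : ℤ)) : ZMod (g * v)))
        (fun j => ((-(j : ℤ) : ℤ) : ZMod (g * v))) f f, mul_add] at hpi
    have h4s : (4 : AddMonoidAlgebra ℤ (ZMod (g * v)))
        = AddMonoidAlgebra.single (0 : ZMod (g * v)) (4 : ℤ) := by
      rw [show (4 : AddMonoidAlgebra ℤ (ZMod (g * v))) = 2 * 2 by norm_num, two_single,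
        AddMonoidAlgebra.single_mul_single]
      norm_num
    have hdistr : ∀ u w : ℕ → ℤ,
        (4 : AddMonoidAlgebra ℤ (ZMod (g * v))) * (∑ i ∈ range (g * v), ∑ j ∈ range (g * v),
          (AddMonoidAlgebra.single
            ((((i : ℤ)) : ZMod (g * v)) + ((-(j : ℤ) : ℤ) : ZMod (g * v))) (u i * w j)
            : AddMonoidAlgebra ℤ (ZMod (g * v))))
        = ∑ i ∈ range (g * v), ∑ j ∈ range (g * v),
            AddMonoidAlgebra.single
              ((((i : ℤ)) : ZMod (g * v)) + ((-(j : ℤ) : ℤ) : ZMod (g * v)))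
              (4 * (u i * w j)) := by
      intro u w
      rw [h4s, Finset.mul_sum]
      refine sum_congr rfl fun i _ => ?_
      rw [Finset.mul_sum]
      refine sum_congr rfl fun j _ => ?_
      rw [AddMonoidAlgebra.single_mul_single, zero_add]
    rw [hdistr e e, hdistr f f] at hpi
    have hcoeff := DFunLike.congr_fun (congrArg AddMonoidAlgebra.coeff hpi) (((s : ℕ)) : ZMod (g * v))
    rw [AddMonoidAlgebra.coeff_add, Finsupp.add_apply,
      dsum_apply (g * v) (g * v)
        (fun i j => (((i : ℤ)) : ZMod (g * v)) + ((-(j : ℤ) : ℤ) : ZMod (g * v)))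
        (fun i j => 4 * (e i * e j)) (((s : ℕ)) : ZMod (g * v)),
      dsum_apply (g * v) (g * v)
        (fun i j => (((i : ℤ)) : ZMod (g * v)) + ((-(j : ℤ) : ℤ) : ZMod (g * v)))
        (fun i j => 4 * (f i * f j)) (((s : ℕ)) : ZMod (g * v)),
      corr_apply_mod (g * v) hN s (fun i j => 4 * (e i * e j)),
      corr_apply_mod (g * v) hN s (fun i j => 4 * (f i * f j)),
      AddMonoidAlgebra.coeff_single, Finsupp.single_apply] at hcoeff
    rw [if_neg (by
      intro h
      have : ((s : ℕ) : ZMod (g * v)) = 0 := h.symm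
      rw [ZMod.natCast_eq_zero_iff] at this
      have := Nat.le_of_dvd hs0 this
      omega)] at hcoeff
    have he4 : (∑ j ∈ range (g * v), 4 * (e ((j + s) % (g * v)) * e j))
        = 4 * ∑ j ∈ range (g * v), e ((j + s) % (g * v)) * e j := by
      rw [Finset.mul_sum]
    have hf4 : (∑ j ∈ range (g * v), 4 * (f ((j + s) % (g * v)) * f j))
        = 4 * ∑ j ∈ range (g * v), f ((j + s) % (g * v)) * f j := by
      rw [Finset.mul_sum]
    rw [he4, hf4] at hcoeff
    linarith
end

section
/- With E, F defined by the Turyn formulas from a Golay pair (A, B) of length g and any pair (C, D) of sequences of length v, the identity E(z)E(z^{−1}) + F(z)F(z^{−1}) = g·(C(z^g)C(z^{−g}) + D(z^g)D(z^{−g})) holds in ℤ[z, z^{−1}]. -/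
open LaurentPolynomial

/-- The substitution z ↦ z^m as a ring homomorphism. -/
noncomputable def SP (m : ℤ) : LaurentPolynomial ℤ →+* LaurentPolynomial ℤ :=
  AddMonoidAlgebra.mapDomainRingHom ℤ (AddMonoidHom.mulLeft m)

lemma SP_apply (m : ℤ) (p : LaurentPolynomial ℤ) :
    SP m p = AddMonoidAlgebra.ofCoeff (Finsupp.mapDomain (fun n => m * n) p.coeff) := rfl

/-- Substitution z ↦ z^g on Laurent polynomials over ℤ. -/
noncomputable def subPow (g : ℤ) (p : LaurentPolynomial ℤ) : LaurentPolynomial ℤ :=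
  p.coeff.sum fun n a => C a * T (g * n)

lemma subPow_eq_SP (m : ℤ) (p : LaurentPolynomial ℤ) : subPow m p = SP m p := by
  rw [SP_apply, show AddMonoidAlgebra.ofCoeff (Finsupp.mapDomain (fun n => m * n) p.coeff)
      = p.coeff.sum (fun a b => AddMonoidAlgebra.single (m * a) b) from
        AddMonoidAlgebra.ofCoeff_finsuppSum _ _]
  exact Finsupp.sum_congr fun n _ => (single_eq_C_mul_T _ _).symm

lemma SP_T (m k : ℤ) : SP m (T k) = T (m * k) := by
  rw [SP_apply, T, AddMonoidAlgebra.coeff_single, Finsupp.mapDomain_single]; rfl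

lemma SP_comp (g : ℤ) (p : LaurentPolynomial ℤ) : SP (-1) (SP g p) = SP (-g) p := by
  rw [SP_apply, SP_apply, AddMonoidAlgebra.coeff_ofCoeff, ← Finsupp.mapDomain_comp, SP_apply]
  congr 2
  funext x
  show -1 * (g * x) = -g * x
  ring

lemma fourLP_ne_zero : (4 : LaurentPolynomial ℤ) ≠ 0 := by
  intro h
  have h3 : ((4 : LaurentPolynomial ℤ)) = C 4 := by norm_num
  have h2 := congrArg (fun p : LaurentPolynomial ℤ => p.coeff 0) (h3.symm.trans h)
  have h4 : (C (4 : ℤ)).coeff 0 = (4 : ℤ) := by simp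
  have h5 : ((0 : LaurentPolynomial ℤ)).coeff 0 = (0 : ℤ) := rfl
  simp only [h4, h5] at h2
  norm_num at h2

/-- with E, F defined by Turyn's formulas from a Golay pair (A,B)
of length g and arbitrary C, D of length v, one has
E(z)E(z⁻¹) + F(z)F(z⁻¹) = g(C(z^g)C(z^{-g}) + D(z^g)D(z^{-g})). -/
theorem turyn_key_identity (g v : ℕ) (hg : 0 < g)
    (A B Cc D E F : LaurentPolynomial ℤ)
    (hAB : A * subPow (-1) A + B * subPow (-1) B = C (2 * (g : ℤ)))
    (hE : 2 * E = (A + B) * subPow g Cc +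
      (A - B) * subPow (-(g : ℤ)) D * T ((g : ℤ) * v - g))
    (hF : 2 * F = (B - A) * subPow (-(g : ℤ)) Cc * T ((g : ℤ) * v - g) +
      (A + B) * subPow g D) :
    E * subPow (-1) E + F * subPow (-1) F =
      C (g : ℤ) * (subPow g Cc * subPow (-(g : ℤ)) Cc +
        subPow g D * subPow (-(g : ℤ)) D) := by
  simp only [subPow_eq_SP] at hAB hE hF ⊢
  have hE' : 2 * SP (-1) E = (SP (-1) A + SP (-1) B) * SP (-(g : ℤ)) Cc +
      (SP (-1) A - SP (-1) B) * SP (g : ℤ) D * T (-((g : ℤ) * v - g)) := by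
    have h := congrArg (SP (-1)) hE
    simpa [map_mul, map_add, map_sub, map_ofNat, SP_comp, SP_T, neg_one_mul] using h
  have hF' : 2 * SP (-1) F = (SP (-1) B - SP (-1) A) * SP (g : ℤ) Cc *
      T (-((g : ℤ) * v - g)) + (SP (-1) A + SP (-1) B) * SP (-(g : ℤ)) D := by
    have h := congrArg (SP (-1)) hF
    simpa [map_mul, map_add, map_sub, map_ofNat, SP_comp, SP_T, neg_one_mul] using h
  have htt : T ((g : ℤ) * v - g) * T (-((g : ℤ) * v - g)) = (1 : LaurentPolynomial ℤ) := by
    rw [← T_add]; simp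
  have hC2 : C (2 * (g : ℤ)) = 2 * C (g : ℤ) := by
    rw [map_mul]; norm_num
  have h4 : (2 * E) * (2 * SP (-1) E) + (2 * F) * (2 * SP (-1) F) =
      4 * (C (g : ℤ) * (SP (g : ℤ) Cc * SP (-(g : ℤ)) Cc +
        SP (g : ℤ) D * SP (-(g : ℤ)) D)) := by
    rw [hE, hE', hF, hF']
    linear_combination
      (SP (g : ℤ) Cc * SP (-(g : ℤ)) Cc + SP (g : ℤ) D * SP (-(g : ℤ)) D) *
        ((A - B) * (SP (-1) A - SP (-1) B) * htt + 2 * hAB + 2 * hC2)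
  apply mul_left_cancel₀ fourLP_ne_zero
  linear_combination h4
end

section
/- If C(z)C(z^{−1}) + D(z)D(z^{−1}) ≡ 2v mod (z^v − 1) in ℤ[z, z^{−1}], then for any positive integer g, C(z^g)C(z^{−g}) + D(z^g)D(z^{−g}) ≡ 2v mod (z^{gv} − 1). -/
open LaurentPolynomial

/-- `subPow g` as a ring hom. -/
noncomputable def subPowHom (g : ℤ) : LaurentPolynomial ℤ →+* LaurentPolynomial ℤ :=
  AddMonoidAlgebra.mapDomainRingHom ℤ (AddMonoidHom.mulLeft g)

lemma subPow_eq (g : ℤ) (p : LaurentPolynomial ℤ) : subPow g p = subPowHom g p := by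
  show _ = AddMonoidAlgebra.mapDomain _ p
  conv_rhs => rw [← AddMonoidAlgebra.sum_coeff_single p, AddMonoidAlgebra.mapDomain_sum]
  refine Finsupp.sum_congr fun n _ => ?_
  rw [AddMonoidAlgebra.mapDomain_single, single_eq_C_mul_T]
  rfl

lemma subPowHom_T (g n : ℤ) : subPowHom g (T n) = T (g * n) := by
  show AddMonoidAlgebra.mapDomain _ (AddMonoidAlgebra.single n (1:ℤ)) = _
  rw [AddMonoidAlgebra.mapDomain_single]
  rfl

lemma subPowHom_C (g : ℤ) (a : ℤ) : subPowHom g (C a) = C a := by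
  show AddMonoidAlgebra.mapDomain _ (AddMonoidAlgebra.single 0 a) = _
  rw [AddMonoidAlgebra.mapDomain_single]
  show AddMonoidAlgebra.single (g * 0) a = _
  rw [mul_zero]; rfl

lemma subPowHom_subPow (g h : ℤ) (p : LaurentPolynomial ℤ) :
    subPowHom g (subPow h p) = subPow (g * h) p := by
  rw [subPow_eq, subPow_eq]
  show AddMonoidAlgebra.ofCoeff (Finsupp.mapDomain _ (Finsupp.mapDomain _ p.coeff)) =
    AddMonoidAlgebra.ofCoeff (Finsupp.mapDomain _ p.coeff)
  rw [← Finsupp.mapDomain_comp]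
  congr 1
  refine Finsupp.mapDomain_congr fun n _ => ?_
  show g * (h * n) = g * h * n
  ring

/-- if C(z)C(z⁻¹) + D(z)D(z⁻¹) ≡ 2v mod (z^v - 1), then
C(z^g)C(z^{-g}) + D(z^g)D(z^{-g}) ≡ 2v mod (z^{gv} - 1). -/
theorem congruence_lifted_by_substitution (v g : ℕ) (hv : 0 < v) (hg : 0 < g)
    (Cc D : LaurentPolynomial ℤ)
    (h : Cc * subPow (-1) Cc + D * subPow (-1) D - C (2 * (v : ℤ))
          ∈ Ideal.span {T (v : ℤ) - 1}) :
    subPow g Cc * subPow (-(g : ℤ)) Cc + subPow g D * subPow (-(g : ℤ)) D -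
      C (2 * (v : ℤ)) ∈ Ideal.span {T ((g : ℤ) * v) - 1} := by
  rw [Ideal.mem_span_singleton] at h ⊢
  obtain ⟨q, hq⟩ := h
  refine ⟨subPowHom g q, ?_⟩
  have := congrArg (subPowHom (g : ℤ)) hq
  simp only [map_sub, map_add, map_mul, map_one, subPowHom_T, subPowHom_C,
    subPowHom_subPow] at this
  rw [← subPow_eq, ← subPow_eq, ← map_mul C] at this
  convert this using 3 <;> ring_nf
end

section
/- If v is a Golay number (there exists a Golay pair of length v) and w is a periodic Golay number (there exists a periodic Golay pair of length w), then vw is a periodic Golay number. In particular the set of periodic Golay numbers is closed under multiplication by elements of {2^a·10^b·26^c : a,b,c ≥ 0} whenever those are Golay numbers. -/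
open Finset

/-! ### Auxiliary lemmas for the Turyn-type multiplication -/

lemma zsum_range {v : ℕ} [NeZero v] (h : ℕ → ℤ) :
    ∑ k ∈ Finset.range v, h k = ∑ x : ZMod v, h x.val := by
  refine Finset.sum_nbij' (i := fun k => (k : ZMod v)) (j := fun x => x.val)
    ?_ ?_ ?_ ?_ ?_
  · intro a _; exact Finset.mem_univ _
  · intro x _; exact Finset.mem_range.2 x.val_lt
  · intro a ha; exact ZMod.val_cast_of_lt (Finset.mem_range.1 ha)
  · intro x _; exact ZMod.natCast_rightInverse x
  · intro a ha; rw [ZMod.val_cast_of_lt (Finset.mem_range.1 ha)]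

lemma zval_add_nat {v : ℕ} [NeZero v] (x : ZMod v) (u : ℕ) :
    (x.val + u) % v = (x + (u : ZMod v)).val := by
  rw [ZMod.val_add, ZMod.val_natCast]
  conv_lhs => rw [Nat.add_mod, Nat.mod_eq_of_lt x.val_lt]

lemma zval_neg_one_sub {v : ℕ} [NeZero v] (x : ZMod v) :
    v - 1 - x.val = (-1 - x).val := by
  have hv : 0 < v := Nat.pos_of_ne_zero (NeZero.ne v)
  have hx : x.val < v := x.val_lt
  have h1 : ((v - 1 - x.val : ℕ) : ZMod v) = -1 - x := by
    rw [Nat.cast_sub (by omega : x.val ≤ v - 1), Nat.cast_sub (by omega : 1 ≤ v)]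
    rw [ZMod.natCast_self, ZMod.natCast_rightInverse x, Nat.cast_one]
    ring
  rw [← h1, ZMod.val_cast_of_lt (by omega)]

lemma inv_bij {v : ℕ} [NeZero v] (u : ZMod v) :
    Function.Bijective (fun x : ZMod v => -1 - u - x) := by
  have : Function.Involutive (fun x : ZMod v => -1 - u - x) := fun x => by ring
  exact this.bijective

/-- reversed combined periodic autocorrelation equals the plain one -/
lemma ksum_rev {v : ℕ} [NeZero v] (c d : ℕ → ℤ) (u : ℕ) :
    ∑ k ∈ Finset.range v,
      (c (v - 1 - (k + u) % v) * c (v - 1 - k) + d (v - 1 - (k + u) % v) * d (v - 1 - k))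
    = ∑ k ∈ Finset.range v, (c ((k + u) % v) * c k + d ((k + u) % v) * d k) := by
  rw [zsum_range, zsum_range]
  have h1 : ∀ x : ZMod v,
      c (v - 1 - (x.val + u) % v) * c (v - 1 - x.val) + d (v - 1 - (x.val + u) % v) * d (v - 1 - x.val)
      = c ((-1 - (x + (u : ZMod v))).val) * c ((-1 - x).val)
        + d ((-1 - (x + (u : ZMod v))).val) * d ((-1 - x).val) := by
    intro x
    rw [zval_add_nat, zval_neg_one_sub, zval_neg_one_sub]
  have h2 : ∀ x : ZMod v,
      c ((x.val + u) % v) * c x.val + d ((x.val + u) % v) * d x.val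
      = c ((x + (u : ZMod v)).val) * c x.val + d ((x + (u : ZMod v)).val) * d x.val := by
    intro x; rw [zval_add_nat]
  simp only [h1, h2]
  refine Fintype.sum_bijective (fun x : ZMod v => -1 - (u : ZMod v) - x) (inv_bij _)
    _ _ ?_
  intro x
  beta_reduce
  rw [show (-1 - (u : ZMod v) - x) + (u : ZMod v) = -1 - x from by ring,
    show (-1 - (u : ZMod v) - x) = -1 - (x + (u : ZMod v)) from by ring]
  ring

lemma ksum_cross1 {v : ℕ} [NeZero v] (c d : ℕ → ℤ) (u : ℕ) :
    ∑ k ∈ Finset.range v,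
      (c ((k + u) % v) * d (v - 1 - k) - d ((k + u) % v) * c (v - 1 - k)) = 0 := by
  rw [zsum_range]
  have h1 : ∀ x : ZMod v,
      c ((x.val + u) % v) * d (v - 1 - x.val) - d ((x.val + u) % v) * c (v - 1 - x.val)
      = c ((x + (u : ZMod v)).val) * d ((-1 - x).val)
        - d ((x + (u : ZMod v)).val) * c ((-1 - x).val) := by
    intro x; rw [zval_add_nat, zval_neg_one_sub]
  simp only [h1]
  rw [Finset.sum_sub_distrib]
  rw [show (∑ x : ZMod v, d ((x + (u : ZMod v)).val) * c ((-1 - x).val))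
      = ∑ x : ZMod v, c ((x + (u : ZMod v)).val) * d ((-1 - x).val) from ?_, sub_self]
  refine Fintype.sum_bijective (fun x : ZMod v => -1 - (u : ZMod v) - x) (inv_bij _) _ _ ?_
  intro x
  beta_reduce
  rw [show (-1 - (u : ZMod v) - x) + (u : ZMod v) = -1 - x from by ring,
    show -1 - (-1 - (u : ZMod v) - x) = x + (u : ZMod v) from by ring]
  ring

lemma ksum_cross2 {v : ℕ} [NeZero v] (c d : ℕ → ℤ) (u : ℕ) :
    ∑ k ∈ Finset.range v,
      (d (v - 1 - (k + u) % v) * c k - c (v - 1 - (k + u) % v) * d k) = 0 := by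
  rw [zsum_range]
  have h1 : ∀ x : ZMod v,
      d (v - 1 - (x.val + u) % v) * c x.val - c (v - 1 - (x.val + u) % v) * d x.val
      = d ((-1 - (x + (u : ZMod v))).val) * c x.val
        - c ((-1 - (x + (u : ZMod v))).val) * d x.val := by
    intro x; rw [zval_add_nat, zval_neg_one_sub]
  simp only [h1]
  rw [Finset.sum_sub_distrib]
  rw [show (∑ x : ZMod v, d ((-1 - (x + (u : ZMod v))).val) * c x.val)
      = ∑ x : ZMod v, c ((-1 - (x + (u : ZMod v))).val) * d x.val from ?_, sub_self]
  refine Fintype.sum_bijective (fun x : ZMod v => -1 - (u : ZMod v) - x) (inv_bij _) _ _ ?_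
  intro x
  beta_reduce
  rw [show -1 - ((-1 - (u : ZMod v) - x) + (u : ZMod v)) = x from by ring,
    show (-1 - (u : ZMod v) - x) = -1 - (x + (u : ZMod v)) from by ring]
  ring

lemma sum_range_mul_eq (f : ℕ → ℤ) (g v : ℕ) :
    ∑ j ∈ Finset.range (g * v), f j
      = ∑ k ∈ Finset.range v, ∑ i ∈ Finset.range g, f (g * k + i) := by
  induction v with
  | zero => simp
  | succ n ih =>
    rw [Nat.mul_succ, Finset.sum_range_add, ih, Finset.sum_range_succ]

lemma mod_decomp {g v : ℕ} (hg : 0 < g) (hv : 0 < v) {i0 : ℕ} (hi : i0 < g) (m : ℕ) :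
    (g * m + i0) % (g * v) = g * (m % v) + i0 := by
  have h1 : m % v < v := Nat.mod_lt _ hv
  have hb : g * (m % v) + i0 < g * v := by
    calc g * (m % v) + i0 < g * (m % v) + g := by omega
    _ = g * (m % v + 1) := by ring
    _ ≤ g * v := Nat.mul_le_mul_left g (by omega)
  conv_lhs => rw [Nat.add_mod, Nat.mul_mod_mul_left, Nat.mod_eq_of_lt (by omega : i0 < g * v)]
  exact Nat.mod_eq_of_lt hb

/-- The Turyn-multiplied sequences. -/
def TE (g v : ℕ) (a b c d : ℕ → ℤ) : ℕ → ℤ := fun j =>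
  if a (j % g) = b (j % g) then c (j / g) * a (j % g) else d (v - 1 - j / g) * a (j % g)

def TF (g v : ℕ) (a b c d : ℕ → ℤ) : ℕ → ℤ := fun j =>
  if a (j % g) = b (j % g) then d (j / g) * a (j % g) else -(c (v - 1 - j / g) * a (j % g))

def TE2 (g v : ℕ) (a b c d : ℕ → ℤ) : ℕ → ℤ := fun j =>
  c (j / g) * (a (j % g) + b (j % g)) + d (v - 1 - j / g) * (a (j % g) - b (j % g))

def TF2 (g v : ℕ) (a b c d : ℕ → ℤ) : ℕ → ℤ := fun j =>
  d (j / g) * (a (j % g) + b (j % g)) - c (v - 1 - j / g) * (a (j % g) - b (j % g))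

lemma TE_two (g v : ℕ) (a b c d : ℕ → ℤ) (j : ℕ)
    (h1 : a (j % g) = 1 ∨ a (j % g) = -1) (h2 : b (j % g) = 1 ∨ b (j % g) = -1) :
    2 * TE g v a b c d j = TE2 g v a b c d j ∧ 2 * TF g v a b c d j = TF2 g v a b c d j := by
  unfold TE TF TE2 TF2
  rcases h1 with h1 | h1 <;> rcases h2 with h2 | h2 <;> rw [h1, h2] <;>
    constructor <;> norm_num <;> ring

lemma TE2_eval (g v : ℕ) (hg : 0 < g) (a b c d : ℕ → ℤ) {i : ℕ} (hi : i < g) (k : ℕ) :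
    TE2 g v a b c d (g * k + i) = c k * (a i + b i) + d (v - 1 - k) * (a i - b i) := by
  unfold TE2
  rw [Nat.mul_add_mod, Nat.mod_eq_of_lt hi, Nat.mul_add_div hg, Nat.div_eq_of_lt hi,
    Nat.add_zero]

lemma TF2_eval (g v : ℕ) (hg : 0 < g) (a b c d : ℕ → ℤ) {i : ℕ} (hi : i < g) (k : ℕ) :
    TF2 g v a b c d (g * k + i) = d k * (a i + b i) - c (v - 1 - k) * (a i - b i) := by
  unfold TF2
  rw [Nat.mul_add_mod, Nat.mod_eq_of_lt hi, Nat.mul_add_div hg, Nat.div_eq_of_lt hi,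
    Nat.add_zero]

/-- The key autocorrelation computation. -/
lemma key_sum (g v : ℕ) (hg : 0 < g) (hv : 0 < v) (a b c d : ℕ → ℤ)
    (hab : ∀ s, 1 ≤ s → s < g →
      (∑ j ∈ Finset.range (g - s), a j * a (j + s)) +
      (∑ j ∈ Finset.range (g - s), b j * b (j + s)) = 0)
    (hcd : ∀ s, 0 < s → s < v →
      (∑ j ∈ Finset.range v, c ((j + s) % v) * c j) +
      (∑ j ∈ Finset.range v, d ((j + s) % v) * d j) = 0)
    (s : ℕ) (hs0 : 0 < s) (hsv : s < g * v) :
    ∑ j ∈ Finset.range (g * v),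
      (TE2 g v a b c d ((j + s) % (g * v)) * TE2 g v a b c d j
        + TF2 g v a b c d ((j + s) % (g * v)) * TF2 g v a b c d j) = 0 := by
  haveI : NeZero v := ⟨hv.ne'⟩
  set r := s % g with hrdef
  set t := s / g with htdef
  have hr : r < g := Nat.mod_lt _ hg
  have ht : t < v := Nat.div_lt_of_lt_mul hsv
  have hrt : g * t + r = s := Nat.div_add_mod s g
  -- inner sums
  have inner1 : ∀ i, i + r < g →
      (∑ k ∈ Finset.range v,
        (TE2 g v a b c d ((g * k + i + s) % (g * v)) * TE2 g v a b c d (g * k + i)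
          + TF2 g v a b c d ((g * k + i + s) % (g * v)) * TF2 g v a b c d (g * k + i)))
      = (2 * (a (i + r) * a i + b (i + r) * b i))
          * ∑ k ∈ Finset.range v, (c ((k + t) % v) * c k + d ((k + t) % v) * d k) := by
    intro i hi
    have hig : i < g := by omega
    have expand : ∀ k ∈ Finset.range v,
        TE2 g v a b c d ((g * k + i + s) % (g * v)) * TE2 g v a b c d (g * k + i)
          + TF2 g v a b c d ((g * k + i + s) % (g * v)) * TF2 g v a b c d (g * k + i)
        = (a (i + r) + b (i + r)) * (a i + b i) * (c ((k + t) % v) * c k + d ((k + t) % v) * d k)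
          + (a (i + r) - b (i + r)) * (a i - b i)
              * (c (v - 1 - (k + t) % v) * c (v - 1 - k) + d (v - 1 - (k + t) % v) * d (v - 1 - k))
          + (a (i + r) + b (i + r)) * (a i - b i)
              * (c ((k + t) % v) * d (v - 1 - k) - d ((k + t) % v) * c (v - 1 - k))
          + (a (i + r) - b (i + r)) * (a i + b i)
              * (d (v - 1 - (k + t) % v) * c k - c (v - 1 - (k + t) % v) * d k) := by
      intro k _
      have idx : g * k + i + s = g * (k + t) + (i + r) := by rw [← hrt]; ring
      rw [idx, mod_decomp hg hv hi (k + t), TE2_eval g v hg a b c d hi,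
        TF2_eval g v hg a b c d hi, TE2_eval g v hg a b c d hig,
        TF2_eval g v hg a b c d hig]
      ring
    rw [Finset.sum_congr rfl expand]
    rw [Finset.sum_add_distrib, Finset.sum_add_distrib, Finset.sum_add_distrib,
      ← Finset.mul_sum, ← Finset.mul_sum, ← Finset.mul_sum, ← Finset.mul_sum]
    rw [ksum_rev c d t, ksum_cross1 c d t, ksum_cross2 c d t]
    ring
  have inner2 : ∀ i2, i2 < r →
      (∑ k ∈ Finset.range v,
        (TE2 g v a b c d ((g * k + (g - r + i2) + s) % (g * v)) * TE2 g v a b c d (g * k + (g - r + i2))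
          + TF2 g v a b c d ((g * k + (g - r + i2) + s) % (g * v)) * TF2 g v a b c d (g * k + (g - r + i2))))
      = (2 * (a i2 * a (g - r + i2) + b i2 * b (g - r + i2)))
          * ∑ k ∈ Finset.range v, (c ((k + (t + 1)) % v) * c k + d ((k + (t + 1)) % v) * d k) := by
    intro i2 hi2
    have hig : g - r + i2 < g := by omega
    have hi2g : i2 < g := by omega
    have expand : ∀ k ∈ Finset.range v,
        TE2 g v a b c d ((g * k + (g - r + i2) + s) % (g * v)) * TE2 g v a b c d (g * k + (g - r + i2))
          + TF2 g v a b c d ((g * k + (g - r + i2) + s) % (g * v)) * TF2 g v a b c d (g * k + (g - r + i2))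
        = (a i2 + b i2) * (a (g - r + i2) + b (g - r + i2))
              * (c ((k + (t + 1)) % v) * c k + d ((k + (t + 1)) % v) * d k)
          + (a i2 - b i2) * (a (g - r + i2) - b (g - r + i2))
              * (c (v - 1 - (k + (t + 1)) % v) * c (v - 1 - k)
                + d (v - 1 - (k + (t + 1)) % v) * d (v - 1 - k))
          + (a i2 + b i2) * (a (g - r + i2) - b (g - r + i2))
              * (c ((k + (t + 1)) % v) * d (v - 1 - k) - d ((k + (t + 1)) % v) * c (v - 1 - k))
          + (a i2 - b i2) * (a (g - r + i2) + b (g - r + i2))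
              * (d (v - 1 - (k + (t + 1)) % v) * c k - c (v - 1 - (k + (t + 1)) % v) * d k) := by
      intro k _
      have hgr : g - r + i2 + r = g + i2 := by omega
      have idx : g * k + (g - r + i2) + s = g * (k + (t + 1)) + i2 := by
        rw [← hrt]
        calc g * k + (g - r + i2) + (g * t + r) = g * k + g * t + (g - r + i2 + r) := by ring
        _ = g * k + g * t + (g + i2) := by rw [hgr]
        _ = g * (k + (t + 1)) + i2 := by ring
      rw [idx, mod_decomp hg hv hi2g (k + (t + 1)), TE2_eval g v hg a b c d hi2g,
        TF2_eval g v hg a b c d hi2g, TE2_eval g v hg a b c d hig,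
        TF2_eval g v hg a b c d hig]
      ring
    rw [Finset.sum_congr rfl expand]
    rw [Finset.sum_add_distrib, Finset.sum_add_distrib, Finset.sum_add_distrib,
      ← Finset.mul_sum, ← Finset.mul_sum, ← Finset.mul_sum, ← Finset.mul_sum]
    rw [ksum_rev c d (t + 1), ksum_cross1 c d (t + 1), ksum_cross2 c d (t + 1)]
    ring
  -- reorganize the double sum
  rw [sum_range_mul_eq, Finset.sum_comm]
  have hsplit :
      ∑ i ∈ Finset.range g, ∑ k ∈ Finset.range v,
        (TE2 g v a b c d ((g * k + i + s) % (g * v)) * TE2 g v a b c d (g * k + i)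
          + TF2 g v a b c d ((g * k + i + s) % (g * v)) * TF2 g v a b c d (g * k + i))
      = (∑ i ∈ Finset.range (g - r), (2 * (a (i + r) * a i + b (i + r) * b i))
            * ∑ k ∈ Finset.range v, (c ((k + t) % v) * c k + d ((k + t) % v) * d k))
        + ∑ i2 ∈ Finset.range r,
            (2 * (a i2 * a (g - r + i2) + b i2 * b (g - r + i2)))
              * ∑ k ∈ Finset.range v, (c ((k + (t + 1)) % v) * c k + d ((k + (t + 1)) % v) * d k) := by
    have hgsum := Finset.sum_range_add (fun i => ∑ k ∈ Finset.range v,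
        (TE2 g v a b c d ((g * k + i + s) % (g * v)) * TE2 g v a b c d (g * k + i)
          + TF2 g v a b c d ((g * k + i + s) % (g * v)) * TF2 g v a b c d (g * k + i)))
      (g - r) r
    rw [show g - r + r = g from by omega] at hgsum
    rw [hgsum]
    congr 1
    · refine Finset.sum_congr rfl ?_
      intro i hi
      exact inner1 i (by have := Finset.mem_range.1 hi; omega)
    · refine Finset.sum_congr rfl ?_
      intro i2 hi2
      exact inner2 i2 (Finset.mem_range.1 hi2)
  rw [hsplit]
  -- final case split on r
  rcases Nat.eq_zero_or_pos r with hr0 | hr1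
  · -- r = 0 : use the periodic Golay property at shift t
    have ht0 : 0 < t := by
      rcases Nat.eq_zero_or_pos t with h | h
      · exfalso; rw [h, hr0] at hrt; omega
      · exact h
    have hK0 : ∑ k ∈ Finset.range v, (c ((k + t) % v) * c k + d ((k + t) % v) * d k) = 0 := by
      rw [Finset.sum_add_distrib]
      exact hcd t ht0 ht
    rw [hr0, hK0]
    simp
  · -- 1 ≤ r : use the Golay property at shifts r and g - r
    have h1 := hab r hr1 hr
    have h2 := hab (g - r) (by omega) (by omega)
    rw [show g - (g - r) = r from by omega] at h2
    set K : ℕ → ℤ := fun u =>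
      ∑ k ∈ Finset.range v, (c ((k + u) % v) * c k + d ((k + u) % v) * d k) with hKdef
    have e1 : ∑ i ∈ Finset.range (g - r), (2 * (a (i + r) * a i + b (i + r) * b i)) * K t
        = (2 * K t) * ((∑ i ∈ Finset.range (g - r), a i * a (i + r))
            + ∑ i ∈ Finset.range (g - r), b i * b (i + r)) := by
      rw [← Finset.sum_add_distrib, Finset.mul_sum]
      refine Finset.sum_congr rfl ?_
      intro i _; ring
    have e2 : ∑ i2 ∈ Finset.range r, (2 * (a i2 * a (g - r + i2) + b i2 * b (g - r + i2))) * K (t + 1)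
        = (2 * K (t + 1)) * ((∑ i ∈ Finset.range r, a i * a (i + (g - r)))
            + ∑ i ∈ Finset.range r, b i * b (i + (g - r))) := by
      rw [← Finset.sum_add_distrib, Finset.mul_sum]
      refine Finset.sum_congr rfl ?_
      intro i _
      rw [show g - r + i = i + (g - r) from by omega]
      ring
    rw [e1, e2, h1, h2]
    ring


/-- There is a Golay pair of length g. -/
def IsGolayNumber (g : ℕ) : Prop :=
  ∃ a b : ℕ → ℤ,
    (∀ j < g, a j = 1 ∨ a j = -1) ∧ (∀ j < g, b j = 1 ∨ b j = -1) ∧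
    ∀ s, 1 ≤ s → s < g →
      (∑ j ∈ Finset.range (g - s), a j * a (j + s)) +
      (∑ j ∈ Finset.range (g - s), b j * b (j + s)) = 0

/-- There is a periodic Golay pair of length v. -/
def IsPeriodicGolayNumber (v : ℕ) : Prop :=
  ∃ a b : ℕ → ℤ,
    (∀ j < v, a j = 1 ∨ a j = -1) ∧ (∀ j < v, b j = 1 ∨ b j = -1) ∧
    ∀ s, 0 < s → s < v →
      (∑ j ∈ Finset.range v, a ((j + s) % v) * a j) +
      (∑ j ∈ Finset.range v, b ((j + s) % v) * b j) = 0

lemma periodic_golay_zero : IsPeriodicGolayNumber 0 :=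
  ⟨fun _ => 1, fun _ => 1, fun j hj => absurd hj (Nat.not_lt_zero j),
    fun j hj => absurd hj (Nat.not_lt_zero j),
    fun _ hs0 hsv => absurd (hs0.trans hsv) (lt_irrefl 0)⟩

lemma golay_mul_periodic' (g v : ℕ) (hG : IsGolayNumber g) (hP : IsPeriodicGolayNumber v) :
    IsPeriodicGolayNumber (g * v) := by
  obtain ⟨a, b, ha, hb, hab⟩ := hG
  obtain ⟨c, d, hc, hd, hcd⟩ := hP
  rcases Nat.eq_zero_or_pos g with hg0 | hgpos
  · rw [hg0, zero_mul]; exact periodic_golay_zero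
  rcases Nat.eq_zero_or_pos v with hv0 | hvpos
  · rw [hv0, mul_zero]; exact periodic_golay_zero
  have pm1 : ∀ x y : ℤ, (x = 1 ∨ x = -1) → (y = 1 ∨ y = -1) → (x * y = 1 ∨ x * y = -1) := by
    rintro x y (rfl | rfl) (rfl | rfl) <;> norm_num
  refine ⟨TE g v a b c d, TF g v a b c d, ?_, ?_, ?_⟩
  · intro j hj
    have hjg : j % g < g := Nat.mod_lt _ hgpos
    have hjv : j / g < v := Nat.div_lt_of_lt_mul hj
    have hN : v - 1 - j / g < v := lt_of_le_of_lt (Nat.sub_le (v - 1) (j / g)) (Nat.sub_lt hvpos one_pos)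
    unfold TE
    split
    · exact pm1 _ _ (hc _ hjv) (ha _ hjg)
    · exact pm1 _ _ (hd _ hN) (ha _ hjg)
  · intro j hj
    have hjg : j % g < g := Nat.mod_lt _ hgpos
    have hjv : j / g < v := Nat.div_lt_of_lt_mul hj
    have hN : v - 1 - j / g < v := lt_of_le_of_lt (Nat.sub_le (v - 1) (j / g)) (Nat.sub_lt hvpos one_pos)
    unfold TF
    split
    · exact pm1 _ _ (hd _ hjv) (ha _ hjg)
    · rcases pm1 _ _ (hc _ hN) (ha _ hjg) with h | h
      · right; rw [h]
      · left; rw [h]; norm_num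
  · intro s hs0 hsv
    have key := key_sum g v hgpos hvpos a b c d hab hcd s hs0 hsv
    have h4 : ∀ j : ℕ,
        (4 : ℤ) * (TE g v a b c d ((j + s) % (g * v)) * TE g v a b c d j
          + TF g v a b c d ((j + s) % (g * v)) * TF g v a b c d j)
        = TE2 g v a b c d ((j + s) % (g * v)) * TE2 g v a b c d j
          + TF2 g v a b c d ((j + s) % (g * v)) * TF2 g v a b c d j := by
      intro j
      obtain ⟨e1, f1⟩ := TE_two g v a b c d j (ha _ (Nat.mod_lt _ hgpos)) (hb _ (Nat.mod_lt _ hgpos))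
      obtain ⟨e2, f2⟩ := TE_two g v a b c d ((j + s) % (g * v))
        (ha _ (Nat.mod_lt _ hgpos)) (hb _ (Nat.mod_lt _ hgpos))
      calc (4 : ℤ) * (TE g v a b c d ((j + s) % (g * v)) * TE g v a b c d j
            + TF g v a b c d ((j + s) % (g * v)) * TF g v a b c d j)
          = (2 * TE g v a b c d ((j + s) % (g * v))) * (2 * TE g v a b c d j)
            + (2 * TF g v a b c d ((j + s) % (g * v))) * (2 * TF g v a b c d j) := by ring
        _ = _ := by rw [e1, f1, e2, f2]
    have hmain : (4 : ℤ) * ((∑ j ∈ Finset.range (g * v),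
          TE g v a b c d ((j + s) % (g * v)) * TE g v a b c d j)
        + ∑ j ∈ Finset.range (g * v),
          TF g v a b c d ((j + s) % (g * v)) * TF g v a b c d j) = 0 := by
      rw [← Finset.sum_add_distrib, Finset.mul_sum]
      rw [Finset.sum_congr rfl (fun j _ => h4 j)]
      exact key
    linarith

/-- the product of a Golay number and a periodic Golay number is a
periodic Golay number; in particular the periodic Golay numbers are closed under
multiplication by those 2^a·10^b·26^c that are Golay numbers. -/
theorem golay_mul_periodic_golay :
    (∀ g v : ℕ, IsGolayNumber g → IsPeriodicGolayNumber v →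
      IsPeriodicGolayNumber (g * v)) ∧
    (∀ a b c v : ℕ, IsGolayNumber (2 ^ a * 10 ^ b * 26 ^ c) →
      IsPeriodicGolayNumber v →
      IsPeriodicGolayNumber (2 ^ a * 10 ^ b * 26 ^ c * v)) := by
  exact ⟨golay_mul_periodic', fun a b c v h1 h2 => golay_mul_periodic' _ v h1 h2⟩
end
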